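/- arXiv:1408.2814 — 7 statements merged into one kernel-verified Lean document; each statement's English description precedes it below -/
import Mathlib

section
/- Let p ∈ ℤ and q ∈ ℕ* be relatively prime, γ = 2πp/q, J_{p,q} = diag(e^{i(j-1)γ}) and K_q the cyclic shift matrix. There exists a unitary matrix V ∈ M_q(ℂ) such that V* K_q* V = J_{p,q}, V* J_{p,q} V = (-1)^p e^{-iγ/2} J_{p,q}* K_q, and V* ((-1)^p e^{-iγ/2} J_{p,q}* K_q) V = K_q*. -/
noncomputable section

open Matrix Complex

/-- `J_{p,q}` : the `q × q` diagonal matrix with diagonal entries `e^{i(j-1)γ}`, `j = 1,…,q`,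
where `γ = 2πp/q`. -/
def Jmat (p : ℤ) (q : ℕ) : Matrix (Fin q) (Fin q) ℂ :=
  Matrix.diagonal fun j => Complex.exp (Complex.I * ((j : ℕ) : ℂ) *
    ((2 * Real.pi * (p : ℝ) / (q : ℝ) : ℝ) : ℂ))

/-- `K_q` : the `q × q` cyclic shift matrix, `(K_q)_{jk} = 1` if `k ≡ j+1 [q]`, `0` otherwise. -/
def Kmat (q : ℕ) : Matrix (Fin q) (Fin q) ℂ :=
  Matrix.of fun j k => if ((j : ℕ) + 1) % q = (k : ℕ) then 1 else 0

namespace Stmt1Helper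

/-- `ee p q n = exp(iπpn/q)`. -/
def ee (p : ℤ) (q : ℕ) (n : ℤ) : ℂ :=
  Complex.exp (Complex.I * ((Real.pi * (p : ℝ) / (q : ℝ) : ℝ) : ℂ) * (n : ℂ))

/-- the candidate unitary. -/
def Vm (p : ℤ) (q : ℕ) : Matrix (Fin q) (Fin q) ℂ :=
  Matrix.of fun j k => (((Real.sqrt q)⁻¹ : ℝ) : ℂ) *
    ee p q ((k : ℤ) * ((q : ℤ) - 2 * (j : ℤ) - (k : ℤ)))

section
variable {p : ℤ} {q : ℕ}
lemma ee_add (a b : ℤ) : ee p q (a + b) = ee p q a * ee p q b := by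
  rw [ee, ee, ee, ← Complex.exp_add]; congr 1; push_cast; ring

lemma ee_zero : ee p q 0 = 1 := by simp [ee]

lemma ee_conj (a : ℤ) : (starRingEnd ℂ) (ee p q a) = ee p q (-a) := by
  rw [ee, ee, ← Complex.exp_conj]; congr 1; simp

lemma ee_two_q_mul (hq : 0 < q) (s : ℤ) : ee p q (2 * q * s) = 1 := by
  have hq0 : (q : ℂ) ≠ 0 := by exact_mod_cast hq.ne'
  rw [ee]
  have : Complex.I * ((Real.pi * (p : ℝ) / (q : ℝ) : ℝ) : ℂ) * ((2 * q * s : ℤ) : ℂ)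
      = ((p * s : ℤ) : ℂ) * (2 * Real.pi * Complex.I) := by
    push_cast
    field_simp
  rw [this, Complex.exp_int_mul_two_pi_mul_I]

lemma ee_eq (hq : 0 < q) {a b : ℤ} (s : ℤ) (h : a = b + 2 * q * s) :
    ee p q a = ee p q b := by
  rw [h, ee_add, ee_two_q_mul hq, mul_one]

lemma ee_q (hq : 0 < q) : ee p q (q : ℤ) = (-1 : ℂ) ^ p := by
  have hq0 : (q : ℂ) ≠ 0 := by exact_mod_cast hq.ne'
  rw [ee]
  have : Complex.I * ((Real.pi * (p : ℝ) / (q : ℝ) : ℝ) : ℂ) * ((q : ℤ) : ℂ)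
      = (p : ℂ) * (Real.pi * Complex.I) := by push_cast; field_simp
  rw [this, Complex.exp_int_mul, Complex.exp_pi_mul_I]

lemma ee_pow (n : ℕ) (a : ℤ) : ee p q a ^ n = ee p q (n * a) := by
  rw [ee, ee, ← Complex.exp_nat_mul]; congr 1; push_cast; ring

lemma ee_ne_one (hq : 0 < q) (hpq : Int.gcd p (q : ℤ) = 1) {d : ℤ}
    (hd : ¬ (q : ℤ) ∣ d) : ee p q (2 * d) ≠ 1 := by
  intro h
  rw [ee, Complex.exp_eq_one_iff] at h
  obtain ⟨n, hn⟩ := h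
  have him := congrArg Complex.im hn
  have hqR : (q : ℝ) ≠ 0 := by positivity
  simp [Complex.mul_im, Complex.mul_re] at him
  have hreal : Real.pi * (p : ℝ) * (2 * (d : ℝ)) = (n : ℝ) * (2 * Real.pi) * q := by
    field_simp at him; linear_combination (2 * Real.pi) * him
  have h2 : (2 * Real.pi) * ((p : ℝ) * d - (n : ℝ) * q) = 0 := by linear_combination hreal
  have h3 : (p : ℝ) * d - (n : ℝ) * q = 0 := by
    rcases mul_eq_zero.mp h2 with h | h
    · exact absurd h (by positivity)
    · exact h
  have hZ : p * d = n * q := by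
    have : (p : ℝ) * d = (n : ℝ) * q := by linarith
    exact_mod_cast this
  have hdvd : (q : ℤ) ∣ p * d := ⟨n, by linarith⟩
  have hcop : IsCoprime (q : ℤ) p := by
    rw [Int.isCoprime_iff_gcd_eq_one, Int.gcd_comm]; exact hpq
  exact hd (hcop.dvd_of_dvd_mul_left hdvd)

lemma sum_ee (hq : 0 < q) (hpq : Int.gcd p (q : ℤ) = 1) {d : ℤ}
    (hd : ¬ (q : ℤ) ∣ d) : ∑ m : Fin q, ee p q (2 * (m : ℤ) * d) = 0 := by
  have h1 : ∀ m : Fin q, ee p q (2 * (m : ℤ) * d) = ee p q (2 * d) ^ (m : ℕ) := by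
    intro m; rw [ee_pow]; congr 1; ring
  simp only [h1]
  rw [Fin.sum_univ_eq_sum_range (fun i => ee p q (2 * d) ^ i)]
  rw [geom_sum_eq (ee_ne_one hq hpq hd)]
  have h2 : ee p q (2 * d) ^ q = 1 := by
    rw [ee_pow]
    calc ee p q ((q : ℤ) * (2 * d)) = ee p q 0 := ee_eq hq d (by ring)
    _ = 1 := ee_zero
  rw [h2]; simp

lemma ee_congr {a b : ℤ} (h : a = b) : ee p q a = ee p q b := by rw [h]
/-- predecessor mod q -/
def fpred (hq : 0 < q) (j : Fin q) : Fin q :=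
  ⟨((j : ℕ) + (q - 1)) % q, Nat.mod_lt _ hq⟩

lemma fpred_cond (hq : 0 < q) (j m : Fin q) :
    (((m : ℕ) + 1) % q = (j : ℕ)) ↔ m = fpred hq j := by
  constructor
  · intro h
    apply Fin.ext
    have : ((j : ℕ) + (q - 1)) % q = (((m : ℕ) + 1) % q + (q - 1)) % q := by rw [h]
    rw [Nat.mod_add_mod] at this
    have h2 : (m : ℕ) + 1 + (q - 1) = (m : ℕ) + q := by omega
    rw [h2, Nat.add_mod_right, Nat.mod_eq_of_lt m.isLt] at this
    simp [fpred, this]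
  · intro h
    subst h
    show ((((j : ℕ) + (q - 1)) % q) + 1) % q = (j : ℕ)
    rw [Nat.mod_add_mod]
    have h2 : (j : ℕ) + (q - 1) + 1 = (j : ℕ) + q := by omega
    rw [h2, Nat.add_mod_right, Nat.mod_eq_of_lt j.isLt]

lemma fpred_coe (hq : 0 < q) (j : Fin q) :
    ∃ t : ℤ, ((fpred hq j : Fin q) : ℤ) = (j : ℤ) - 1 + q * t := by
  set x := (j : ℕ) + (q - 1) with hx
  refine ⟨1 - (x / q : ℕ), ?_⟩
  have h := Nat.div_add_mod x q
  have hz0 : ((q * (x / q) + x % q : ℕ) : ℤ) = (x : ℤ) := by exact_mod_cast h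
  push_cast at hz0
  have hx' : (x : ℤ) = (j : ℤ) + q - 1 := by omega
  show ((x % q : ℕ) : ℤ) = _
  push_cast
  linarith [hz0, hx']

lemma fsucc_coe (hq : 0 < q) (j : Fin q) :
    ∃ t : ℤ, ((⟨((j : ℕ) + 1) % q, Nat.mod_lt _ hq⟩ : Fin q) : ℤ) = (j : ℤ) + 1 - q * t := by
  set x := (j : ℕ) + 1 with hx
  refine ⟨(x / q : ℕ), ?_⟩
  have h := Nat.div_add_mod x q
  have hz0 : ((q * (x / q) + x % q : ℕ) : ℤ) = (x : ℤ) := by exact_mod_cast h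
  push_cast at hz0
  have hx' : (x : ℤ) = (j : ℤ) + 1 := by omega
  show ((x % q : ℕ) : ℤ) = _
  push_cast
  linarith [hz0, hx']

def fsucc (hq : 0 < q) (j : Fin q) : Fin q := ⟨((j : ℕ) + 1) % q, Nat.mod_lt _ hq⟩

lemma fsucc_coe' (hq : 0 < q) (j : Fin q) :
    ∃ t : ℤ, ((fsucc hq j : Fin q) : ℤ) = (j : ℤ) + 1 - q * t := fsucc_coe hq j
lemma Vm_apply (j k : Fin q) : Vm p q j k = (((Real.sqrt q)⁻¹ : ℝ) : ℂ) *
    ee p q ((k : ℤ) * ((q : ℤ) - 2 * (j : ℤ) - (k : ℤ))) := rfl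

lemma Vm_star (j k : Fin q) : star (Vm p q j k) = (((Real.sqrt q)⁻¹ : ℝ) : ℂ) *
    ee p q (-((k : ℤ) * ((q : ℤ) - 2 * (j : ℤ) - (k : ℤ)))) := by
  rw [Vm_apply, star_mul']
  rw [show star ((((Real.sqrt q)⁻¹ : ℝ) : ℂ)) = (((Real.sqrt q)⁻¹ : ℝ) : ℂ) from
    Complex.conj_ofReal _]
  rw [show star (ee p q ((k : ℤ) * ((q : ℤ) - 2 * (j : ℤ) - (k : ℤ)))) =
    ee p q (-((k : ℤ) * ((q : ℤ) - 2 * (j : ℤ) - (k : ℤ)))) from ee_conj _]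

lemma rr_mul (hq : 0 < q) :
    ((((Real.sqrt q)⁻¹ : ℝ) : ℂ)) * (((Real.sqrt q)⁻¹ : ℝ) : ℂ) * (q : ℂ) = 1 := by
  have h : Real.sqrt q * Real.sqrt q = q := Real.mul_self_sqrt (by positivity)
  have hs : Real.sqrt q ≠ 0 := by
    have : (0 : ℝ) < q := by exact_mod_cast hq
    positivity
  have hr : ((Real.sqrt q)⁻¹ * (Real.sqrt q)⁻¹ * q : ℝ) = 1 := by
    field_simp
    rw [sq, h]
  calc ((((Real.sqrt q)⁻¹ : ℝ) : ℂ)) * (((Real.sqrt q)⁻¹ : ℝ) : ℂ) * (q : ℂ)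
      = (((Real.sqrt q)⁻¹ * (Real.sqrt q)⁻¹ * q : ℝ) : ℂ) := by push_cast; ring
    _ = 1 := by rw [hr]; norm_num

lemma fin_not_dvd {j k : Fin q} (h : j ≠ k) : ¬ (q : ℤ) ∣ ((j : ℤ) - (k : ℤ)) := by
  intro hdvd
  have h0 : ((j : ℤ) - (k : ℤ)) = 0 := by
    refine Int.eq_zero_of_abs_lt_dvd hdvd ?_
    have hj := j.isLt
    have hk := k.isLt
    rw [abs_lt]
    exact ⟨by omega, by omega⟩
  exact h (Fin.ext (by omega))

lemma Vm_unitary_left (hq : 0 < q) (hpq : Int.gcd p (q : ℤ) = 1) :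
    (Vm p q)ᴴ * Vm p q = 1 := by
  ext j k
  rw [Matrix.mul_apply, Matrix.one_apply]
  set r : ℂ := (((Real.sqrt q)⁻¹ : ℝ) : ℂ) with hr
  have hterm : ∀ m : Fin q, (Vm p q)ᴴ j m * Vm p q m k
      = (r * r * ee p q ((q : ℤ) * ((k : ℤ) - (j : ℤ)) + (j : ℤ)^2 - (k : ℤ)^2)) *
        ee p q (2 * (m : ℤ) * ((j : ℤ) - (k : ℤ))) := by
    intro m
    rw [conjTranspose_apply, Vm_star, Vm_apply, ← hr]
    calc r * ee p q (-((j : ℤ) * ((q : ℤ) - 2 * (m : ℤ) - (j : ℤ)))) *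
          (r * ee p q ((k : ℤ) * ((q : ℤ) - 2 * (m : ℤ) - (k : ℤ))))
        = r * r * ee p q (-((j : ℤ) * ((q : ℤ) - 2 * (m : ℤ) - (j : ℤ))) +
            (k : ℤ) * ((q : ℤ) - 2 * (m : ℤ) - (k : ℤ))) := by rw [ee_add]; ring
      _ = r * r * (ee p q (((q : ℤ) * ((k : ℤ) - (j : ℤ)) + (j : ℤ)^2 - (k : ℤ)^2) +
            2 * (m : ℤ) * ((j : ℤ) - (k : ℤ)))) := by congr 2; ring
      _ = _ := by rw [ee_add]; ring
  rw [Finset.sum_congr rfl (fun m _ => hterm m), ← Finset.mul_sum]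
  by_cases hjk : j = k
  · subst hjk
    rw [if_pos rfl]
    have h1 : ∀ m : Fin q, ee p q (2 * (m : ℤ) * ((j : ℤ) - (j : ℤ))) = 1 := fun m => by
      rw [ee_congr (show 2 * (m : ℤ) * ((j : ℤ) - (j : ℤ)) = 0 by ring), ee_zero]
    rw [Finset.sum_congr rfl (fun m _ => h1 m)]
    simp only [Finset.sum_const, Finset.card_univ, Fintype.card_fin, nsmul_eq_mul, mul_one]
    rw [ee_congr (show (q : ℤ) * ((j : ℤ) - (j : ℤ)) + (j : ℤ)^2 - (j : ℤ)^2 = 0 by ring),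
      ee_zero]
    rw [mul_one]
    exact rr_mul hq
  · rw [if_neg hjk, sum_ee hq hpq (fin_not_dvd hjk), mul_zero]

lemma Vm_unitary_right (hq : 0 < q) (hpq : Int.gcd p (q : ℤ) = 1) :
    Vm p q * (Vm p q)ᴴ = 1 := by
  ext j k
  rw [Matrix.mul_apply, Matrix.one_apply]
  set r : ℂ := (((Real.sqrt q)⁻¹ : ℝ) : ℂ) with hr
  have hterm : ∀ m : Fin q, Vm p q j m * (Vm p q)ᴴ m k
      = (r * r) * ee p q (2 * (m : ℤ) * ((k : ℤ) - (j : ℤ))) := by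
    intro m
    rw [conjTranspose_apply, Vm_star, Vm_apply, ← hr]
    calc r * ee p q ((m : ℤ) * ((q : ℤ) - 2 * (j : ℤ) - (m : ℤ))) *
          (r * ee p q (-((m : ℤ) * ((q : ℤ) - 2 * (k : ℤ) - (m : ℤ)))))
        = r * r * ee p q ((m : ℤ) * ((q : ℤ) - 2 * (j : ℤ) - (m : ℤ)) +
            -((m : ℤ) * ((q : ℤ) - 2 * (k : ℤ) - (m : ℤ)))) := by rw [ee_add]; ring
      _ = _ := by congr 2; ring
  rw [Finset.sum_congr rfl (fun m _ => hterm m), ← Finset.mul_sum]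
  by_cases hjk : j = k
  · subst hjk
    rw [if_pos rfl]
    have h1 : ∀ m : Fin q, ee p q (2 * (m : ℤ) * ((j : ℤ) - (j : ℤ))) = 1 := fun m => by
      rw [ee_congr (show 2 * (m : ℤ) * ((j : ℤ) - (j : ℤ)) = 0 by ring), ee_zero]
    rw [Finset.sum_congr rfl (fun m _ => h1 m)]
    simp only [Finset.sum_const, Finset.card_univ, Fintype.card_fin, nsmul_eq_mul, mul_one]
    exact rr_mul hq
  · rw [if_neg hjk, sum_ee hq hpq (fin_not_dvd (fun h => hjk (Fin.ext (by
      have := Fin.ext_iff.mp h; omega)))), mul_zero]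
lemma fsucc_cond (hq : 0 < q) (j m : Fin q) :
    (((j : ℕ) + 1) % q = (m : ℕ)) ↔ m = fsucc hq j := by
  rw [Fin.ext_iff]; exact eq_comm

lemma J_diag_eq (j : Fin q) :
    Complex.exp (Complex.I * ((j : ℕ) : ℂ) * ((2 * Real.pi * (p : ℝ) / (q : ℝ) : ℝ) : ℂ))
    = ee p q (2 * (j : ℤ)) := by
  rw [ee]; congr 1; push_cast; ring

lemma J_diag_star (j : Fin q) :
    star (Complex.exp (Complex.I * ((j : ℕ) : ℂ) *
      ((2 * Real.pi * (p : ℝ) / (q : ℝ) : ℝ) : ℂ)))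
    = ee p q (-(2 * (j : ℤ))) := by
  rw [J_diag_eq]; exact ee_conj _

/-- identity (A) : Kᴴ V = V J -/
lemma idA (hq : 0 < q) : (Kmat q)ᴴ * Vm p q = Vm p q * Jmat p q := by
  ext j k
  rw [Matrix.mul_apply]
  have hterm : ∀ m : Fin q, (Kmat q)ᴴ j m * Vm p q m k
      = if m = fpred hq j then Vm p q m k else 0 := by
    intro m
    rw [conjTranspose_apply, Kmat]
    by_cases hc : m = fpred hq j
    · rw [if_pos hc, of_apply, if_pos ((fpred_cond hq j m).mpr hc)]
      simp
    · rw [if_neg hc, of_apply,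
        if_neg (fun h => hc ((fpred_cond hq j m).mp h))]
      simp
  rw [Finset.sum_congr rfl (fun m _ => hterm m), Finset.sum_ite_eq' Finset.univ]
  rw [if_pos (Finset.mem_univ _)]
  rw [Jmat, Matrix.mul_diagonal, J_diag_eq, Vm_apply, Vm_apply]
  obtain ⟨t, ht⟩ := fpred_coe hq j
  rw [ht, mul_assoc, ← ee_add]
  congr 1
  exact ee_eq hq (-(k : ℤ) * t) (by ring)

/-- identity (B) : J V = V (ee(q-1) • (Jᴴ K)) -/
lemma idB (hq : 0 < q) : Jmat p q * Vm p q
    = Vm p q * ((ee p q ((q : ℤ) - 1)) • ((Jmat p q)ᴴ * Kmat q)) := by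
  ext j k
  conv_lhs => rw [Jmat, Matrix.diagonal_mul]
  rw [Matrix.mul_smul, Matrix.smul_apply, smul_eq_mul, Matrix.mul_apply]
  have hJK : ∀ m : Fin q, ((Jmat p q)ᴴ * Kmat q) m k
      = if m = fpred hq k then ee p q (-(2 * (m : ℤ))) else 0 := by
    intro m
    rw [Jmat, diagonal_conjTranspose, Matrix.diagonal_mul, Kmat, of_apply]
    rw [Pi.star_apply, J_diag_star]
    by_cases hc : m = fpred hq k
    · rw [if_pos ((fpred_cond hq k m).mpr hc), if_pos hc, mul_one]
    · rw [if_neg (fun h => hc ((fpred_cond hq k m).mp h)), if_neg hc, mul_zero]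
  have hterm : ∀ m : Fin q, Vm p q j m * ((Jmat p q)ᴴ * Kmat q) m k
      = if m = fpred hq k then Vm p q j m * ee p q (-(2 * (m : ℤ))) else 0 := by
    intro m
    rw [hJK m]
    by_cases hc : m = fpred hq k
    · rw [if_pos hc, if_pos hc]
    · rw [if_neg hc, if_neg hc, mul_zero]
  rw [Finset.sum_congr rfl (fun m _ => hterm m), Finset.sum_ite_eq' Finset.univ]
  rw [if_pos (Finset.mem_univ _)]
  rw [J_diag_eq, Vm_apply, Vm_apply]
  obtain ⟨t, ht⟩ := fpred_coe hq k
  obtain ⟨u, hu⟩ := Int.even_mul_succ_self ((t : ℤ) - 1)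
  rw [ht]
  calc ee p q (2 * (j : ℤ)) * ((((Real.sqrt q)⁻¹ : ℝ) : ℂ) *
        ee p q ((k : ℤ) * ((q : ℤ) - 2 * (j : ℤ) - (k : ℤ))))
      = (((Real.sqrt q)⁻¹ : ℝ) : ℂ) *
        ee p q (2 * (j : ℤ) + (k : ℤ) * ((q : ℤ) - 2 * (j : ℤ) - (k : ℤ))) := by
        rw [ee_add]; ring
    _ = (((Real.sqrt q)⁻¹ : ℝ) : ℂ) *
        ee p q (((q : ℤ) - 1) + (((k : ℤ) - 1 + q * t) *
          ((q : ℤ) - 2 * (j : ℤ) - ((k : ℤ) - 1 + q * t)) +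
          (-(2 * ((k : ℤ) - 1 + q * t))))) := by
        congr 1
        exact ee_eq hq ((q : ℤ) * u + t * ((j : ℤ) + (k : ℤ)))
          (by linear_combination ((q : ℤ)^2) * hu)
    _ = ee p q ((q : ℤ) - 1) * ((((Real.sqrt q)⁻¹ : ℝ) : ℂ) *
        ee p q (((k : ℤ) - 1 + q * t) * ((q : ℤ) - 2 * (j : ℤ) - ((k : ℤ) - 1 + q * t))) *
        ee p q (-(2 * ((k : ℤ) - 1 + q * t)))) := by
        rw [ee_add, ee_add]; ring

/-- identity (C) : (ee(q-1) • (Jᴴ K)) V = V Kᴴ -/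
lemma idC (hq : 0 < q) : ((ee p q ((q : ℤ) - 1)) • ((Jmat p q)ᴴ * Kmat q)) * Vm p q
    = Vm p q * (Kmat q)ᴴ := by
  ext j k
  rw [Matrix.smul_mul, Matrix.smul_apply, smul_eq_mul]
  conv_lhs => rw [Matrix.mul_apply]
  conv_rhs => rw [Matrix.mul_apply]
  have hJK : ∀ m : Fin q, ((Jmat p q)ᴴ * Kmat q) j m
      = if m = fsucc hq j then ee p q (-(2 * (j : ℤ))) else 0 := by
    intro m
    rw [Jmat, diagonal_conjTranspose, Matrix.diagonal_mul, Kmat, of_apply]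
    rw [Pi.star_apply, J_diag_star]
    by_cases hc : m = fsucc hq j
    · rw [if_pos ((fsucc_cond hq j m).mpr hc), if_pos hc, mul_one]
    · rw [if_neg (fun h => hc ((fsucc_cond hq j m).mp h)), if_neg hc, mul_zero]
  have hterm : ∀ m : Fin q, ((Jmat p q)ᴴ * Kmat q) j m * Vm p q m k
      = if m = fsucc hq j then ee p q (-(2 * (j : ℤ))) * Vm p q m k else 0 := by
    intro m
    rw [hJK m]
    by_cases hc : m = fsucc hq j
    · rw [if_pos hc, if_pos hc]
    · rw [if_neg hc, if_neg hc, zero_mul]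
  have hterm2 : ∀ m : Fin q, Vm p q j m * (Kmat q)ᴴ m k
      = if m = fsucc hq k then Vm p q j m else 0 := by
    intro m
    rw [conjTranspose_apply, Kmat, of_apply]
    by_cases hc : m = fsucc hq k
    · rw [if_pos hc, if_pos ((fsucc_cond hq k m).mpr hc)]
      simp
    · rw [if_neg hc, if_neg (fun h => hc ((fsucc_cond hq k m).mp h))]
      simp
  rw [Finset.sum_congr rfl (fun m _ => hterm m), Finset.sum_ite_eq' Finset.univ]
  rw [Finset.sum_congr rfl (fun m _ => hterm2 m), Finset.sum_ite_eq' Finset.univ]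
  rw [if_pos (Finset.mem_univ _), if_pos (Finset.mem_univ _)]
  rw [Vm_apply, Vm_apply]
  obtain ⟨t1, ht1⟩ := fsucc_coe' hq j
  obtain ⟨t2, ht2⟩ := fsucc_coe' hq k
  obtain ⟨u, hu⟩ := Int.even_mul_succ_self (t2 : ℤ)
  rw [ht1, ht2]
  calc ee p q ((q : ℤ) - 1) * (ee p q (-(2 * (j : ℤ))) * ((((Real.sqrt q)⁻¹ : ℝ) : ℂ) *
        ee p q ((k : ℤ) * ((q : ℤ) - 2 * ((j : ℤ) + 1 - q * t1) - (k : ℤ)))))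
      = (((Real.sqrt q)⁻¹ : ℝ) : ℂ) *
        ee p q (((q : ℤ) - 1) + (-(2 * (j : ℤ)) +
          (k : ℤ) * ((q : ℤ) - 2 * ((j : ℤ) + 1 - q * t1) - (k : ℤ)))) := by
        rw [ee_add, ee_add]; ring
    _ = (((Real.sqrt q)⁻¹ : ℝ) : ℂ) *
        ee p q (((k : ℤ) + 1 - q * t2) * ((q : ℤ) - 2 * (j : ℤ) - ((k : ℤ) + 1 - q * t2))) := by
        congr 1
        exact ee_eq hq ((k : ℤ) * t1 - t2 * ((j : ℤ) + (k : ℤ) + 1) + (q : ℤ) * u)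
          (by linear_combination ((q : ℤ)^2) * hu)

lemma c_eq (hq : 0 < q) :
    (-1 : ℂ) ^ p * Complex.exp (-(Complex.I) *
      ((2 * Real.pi * (p : ℝ) / (q : ℝ) / 2 : ℝ) : ℂ)) = ee p q ((q : ℤ) - 1) := by
  rw [show ((q : ℤ) - 1) = (q : ℤ) + (-1) from by ring, ee_add, ee_q hq]
  congr 1
  rw [ee]
  congr 1
  push_cast
  ring

end

end Stmt1Helper

open Stmt1Helper in
theorem stmt_1 (p : ℤ) (q : ℕ) (hq : 0 < q) (hpq : Int.gcd p (q : ℤ) = 1) :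
    ∃ V : Matrix (Fin q) (Fin q) ℂ,
      Vᴴ * V = 1 ∧ V * Vᴴ = 1 ∧
      Vᴴ * (Kmat q)ᴴ * V = Jmat p q ∧
      Vᴴ * Jmat p q * V =
        (((-1 : ℂ) ^ p * Complex.exp (-(Complex.I) *
          ((2 * Real.pi * (p : ℝ) / (q : ℝ) / 2 : ℝ) : ℂ))) • ((Jmat p q)ᴴ * Kmat q)) ∧
      Vᴴ * (((-1 : ℂ) ^ p * Complex.exp (-(Complex.I) *
          ((2 * Real.pi * (p : ℝ) / (q : ℝ) / 2 : ℝ) : ℂ))) • ((Jmat p q)ᴴ * Kmat q)) * V =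
        (Kmat q)ᴴ := by
  refine ⟨Vm p q, Vm_unitary_left hq hpq, Vm_unitary_right hq hpq, ?_, ?_, ?_⟩
  · rw [Matrix.mul_assoc, idA hq, ← Matrix.mul_assoc, Vm_unitary_left hq hpq, Matrix.one_mul]
  · rw [c_eq hq, Matrix.mul_assoc, idB hq, ← Matrix.mul_assoc,
      Vm_unitary_left hq hpq, Matrix.one_mul]
  · rw [c_eq hq, Matrix.mul_assoc, idC hq, ← Matrix.mul_assoc,
      Vm_unitary_left hq hpq, Matrix.one_mul]
end
end

section
/- (Chambers formula for Harper) Let p ∈ ℤ and q ∈ ℕ* be relatively prime, γ = 2πp/q, and let M_H(θ₁,θ₂) = (1/2)(e^{iθ₁} J_{p,q} + e^{-iθ₁} J_{p,q}* + e^{iθ₂} K_q + e^{-iθ₂} K_q*). There exists a polynomial f of degree q with real coefficients, depending only on p and q, such that for all (θ₁,θ₂) ∈ ℝ² and all λ ∈ ℂ, det(M_H(θ₁,θ₂) - λ·I_q) = f(λ) + (-1)^{q+1} 2^{1-q} (cos(qθ₁) + cos(qθ₂)). -/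
noncomputable section

open Matrix Complex

/-- The Harper matrix
`M_H(θ₁,θ₂) = (1/2)(e^{iθ₁} J_{p,q} + e^{-iθ₁} J_{p,q}* + e^{iθ₂} K_q + e^{-iθ₂} K_q*)`. -/
def MH (p : ℤ) (q : ℕ) (θ₁ θ₂ : ℝ) : Matrix (Fin q) (Fin q) ℂ :=
  (1 / 2 : ℂ) • (Complex.exp (Complex.I * (θ₁ : ℂ)) • Jmat p q
    + Complex.exp (-(Complex.I) * (θ₁ : ℂ)) • (Jmat p q)ᴴ
    + Complex.exp (Complex.I * (θ₂ : ℂ)) • Kmat q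
    + Complex.exp (-(Complex.I) * (θ₂ : ℂ)) • (Kmat q)ᴴ)

/-! ### Auxiliary material for the proof of Chambers' formula -/

namespace Chambers

open Polynomial

variable {q : ℕ}

/-! #### Generic machinery : determinants of matrices of quadratic polynomials -/

/-- The matrix of quadratic polynomials `X^2 A + X B + C₀`. -/
def triPoly (A B C0 : Matrix (Fin q) (Fin q) ℂ) : Matrix (Fin q) (Fin q) (Polynomial ℂ) :=
  Matrix.of fun i j => Polynomial.C (A i j) * X ^ 2 + Polynomial.C (B i j) * X + Polynomial.C (C0 i j)

lemma triPoly_natDegree_le (A B C0 : Matrix (Fin q) (Fin q) ℂ) (i j : Fin q) :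
    ((triPoly A B C0) i j).natDegree ≤ 2 := by
  simp only [triPoly, Matrix.of_apply]
  apply le_trans (natDegree_add_le _ _)
  simp only [max_le_iff]
  refine ⟨le_trans (natDegree_add_le _ _) ?_, by simp⟩
  simp only [max_le_iff]
  exact ⟨le_trans natDegree_mul_le (by simp), le_trans natDegree_mul_le (by simp)⟩

lemma eval_det_triPoly (A B C0 : Matrix (Fin q) (Fin q) ℂ) (z : ℂ) :
    ((triPoly A B C0).det).eval z = (z ^ 2 • A + z • B + C0).det := by
  have h := RingHom.map_det (Polynomial.evalRingHom z) (triPoly A B C0)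
  simp only [coe_evalRingHom] at h
  rw [h]; congr 1; ext i j
  simp [triPoly, Matrix.add_apply, Matrix.smul_apply, smul_eq_mul, RingHom.mapMatrix_apply,
    Matrix.map_apply]
  ring

lemma coeff_det_triPoly_zero (A B C0 : Matrix (Fin q) (Fin q) ℂ) :
    ((triPoly A B C0).det).coeff 0 = C0.det := by
  rw [Polynomial.coeff_zero_eq_eval_zero, eval_det_triPoly]
  norm_num

lemma coeff_det_triPoly_top (A B C0 : Matrix (Fin q) (Fin q) ℂ) :
    ((triPoly A B C0).det).coeff (2 * q) = A.det := by
  rw [Matrix.det_apply', Polynomial.finset_sum_coeff, Matrix.det_apply']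
  apply Finset.sum_congr rfl
  intro σ _
  rw [← Polynomial.C_eq_intCast, coeff_C_mul]
  congr 1
  have hcard : 2 * q = (Finset.univ : Finset (Fin q)).card * 2 := by
    simp [mul_comm]
  rw [hcard, Polynomial.coeff_prod_of_natDegree_le _ _ _
    (fun i _ => triPoly_natDegree_le A B C0 _ _)]
  apply Finset.prod_congr rfl
  intro i _
  simp [triPoly, coeff_add, coeff_C_mul, coeff_X_pow, coeff_C, coeff_X]

lemma natDegree_det_triPoly (A B C0 : Matrix (Fin q) (Fin q) ℂ) :
    ((triPoly A B C0).det).natDegree ≤ 2 * q := by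
  rw [Matrix.det_apply']
  apply le_trans (Polynomial.natDegree_sum_le _ _)
  rw [Finset.fold_max_le]
  refine ⟨by positivity, fun σ _ => ?_⟩
  simp only [Function.comp_apply]
  apply le_trans natDegree_mul_le
  have h1 : (Polynomial.natDegree (((Equiv.Perm.sign σ : ℤ) : Polynomial ℂ))) = 0 := by
    rcases Int.units_eq_one_or (Equiv.Perm.sign σ) with h | h <;> simp [h]
  rw [h1, zero_add]
  apply le_trans (natDegree_prod_le _ _)
  calc ∑ i : Fin q, ((triPoly A B C0) (σ i) i).natDegree ≤ ∑ _i : Fin q, 2 :=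
        Finset.sum_le_sum fun i _ => triPoly_natDegree_le A B C0 _ _
    _ = 2 * q := by simp [Finset.sum_const, mul_comm]

lemma coeff_comp_C_mul_X (p : Polynomial ℂ) (u : ℂ) (n : ℕ) :
    (p.comp (Polynomial.C u * X)).coeff n = u ^ n * p.coeff n := by
  induction p using Polynomial.induction_on' with
  | add f g hf hg => simp [add_comp, coeff_add, hf, hg, mul_add]
  | monomial m a =>
    rw [Polynomial.monomial_comp, mul_pow, ← Polynomial.C_pow]
    rcases eq_or_ne m n with rfl | hmn
    · simp only [coeff_C_mul, coeff_X_pow, if_pos rfl, coeff_monomial, mul_one, if_true]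
      ring
    · rw [coeff_C_mul, coeff_C_mul, coeff_X_pow, if_neg (Ne.symm hmn), coeff_monomial,
        if_neg hmn, mul_zero, mul_zero, mul_zero]

lemma det_conj_smul {A B C0 U : Matrix (Fin q) (Fin q) ℂ} {u : ℂ}
    (hU : IsUnit U.det) (huq : u ^ q = 1)
    (hA : U * A = u • (A * U)) (hB : U * B = B * U) (hC : u • (U * C0) = C0 * U) (z : ℂ) :
    ((u * z) ^ 2 • A + (u * z) • B + C0).det = (z ^ 2 • A + z • B + C0).det := by
  have key : u • (U * (z ^ 2 • A + z • B + C0)) = ((u * z) ^ 2 • A + (u * z) • B + C0) * U := by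
    rw [Matrix.mul_add, Matrix.mul_add, Matrix.add_mul, Matrix.add_mul,
      Matrix.mul_smul, Matrix.mul_smul, Matrix.smul_mul, Matrix.smul_mul,
      hA, hB, smul_add, smul_add, ← hC]
    rw [smul_smul, smul_smul, smul_smul]
    congr 2
    all_goals ring_nf
  have hdet := congrArg Matrix.det key
  rw [Matrix.det_smul, Matrix.det_mul, Matrix.det_mul, Fintype.card_fin, huq, one_mul] at hdet
  rw [mul_comm] at hdet
  exact (mul_right_cancel₀ hU.ne_zero hdet).symm

lemma coeff_eq_zero_of_symm {P : Polynomial ℂ} {u : ℂ}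
    (hsym : ∀ z : ℂ, P.eval (u * z) = P.eval z)
    (hdvd : ∀ n : ℕ, u ^ n = 1 → q ∣ n) {n : ℕ} (hn : ¬ q ∣ n) : P.coeff n = 0 := by
  have hcomp : P.comp (Polynomial.C u * X) = P := by
    apply Polynomial.funext
    intro r
    rw [Polynomial.eval_comp]
    simpa using hsym r
  have h := congrArg (fun Q => Q.coeff n) hcomp
  simp only [coeff_comp_C_mul_X] at h
  by_contra h0
  exact hn (hdvd n (mul_right_cancel₀ h0 (h.trans (one_mul (P.coeff n)).symm)))

lemma eval_eq_three_terms {P : Polynomial ℂ} (hq : 0 < q) (hdeg : P.natDegree ≤ 2 * q)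
    (hvan : ∀ n : ℕ, ¬ q ∣ n → P.coeff n = 0) (z : ℂ) :
    P.eval z = P.coeff 0 + P.coeff q * z ^ q + P.coeff (2 * q) * z ^ (2 * q) := by
  rw [Polynomial.eval_eq_sum_range' (lt_of_le_of_lt hdeg (Nat.lt_succ_self _)) z]
  have hsub : ({0, q, 2 * q} : Finset ℕ) ⊆ Finset.range (2 * q + 1) := by
    intro x hx
    simp only [Finset.mem_insert, Finset.mem_singleton] at hx
    rcases hx with rfl | rfl | rfl <;> simp [Nat.lt_succ_iff] <;> omega
  rw [← Finset.sum_subset hsub ?hzero]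
  case hzero =>
    intro x hxmem hx
    simp only [Finset.mem_insert, Finset.mem_singleton, not_or] at hx
    obtain ⟨h0, h1, h2⟩ := hx
    have hxr : x < 2 * q + 1 := by simpa [Finset.mem_range] using hxmem
    have : ¬ q ∣ x := by
      rintro ⟨k, rfl⟩
      have : k ≤ 2 := by nlinarith
      interval_cases k <;> omega
    rw [hvan x this, zero_mul]
  have h0q : (0:ℕ) ∉ ({q, 2*q} : Finset ℕ) := by simp; omega
  have hq2q : q ∉ ({2*q} : Finset ℕ) := by simp; omega
  rw [Finset.sum_insert h0q, Finset.sum_insert hq2q, Finset.sum_singleton]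
  ring

/-! #### Phases -/

def γc (p : ℤ) (q : ℕ) : ℂ := ((2 * Real.pi * (p:ℝ) / (q:ℝ) : ℝ) : ℂ)

def ephase (p : ℤ) (q : ℕ) (n : ℕ) : ℂ := Complex.exp (Complex.I * (n:ℂ) * γc p q)

lemma Jmat_diag (p : ℤ) (q : ℕ) :
    Jmat p q = Matrix.diagonal (fun j : Fin q => ephase p q (j:ℕ)) := rfl

lemma ephase_zero (p : ℤ) (q : ℕ) : ephase p q 0 = 1 := by simp [ephase]

lemma ephase_add (p : ℤ) (q : ℕ) (m n : ℕ) :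
    ephase p q (m + n) = ephase p q m * ephase p q n := by
  rw [ephase, ephase, ephase, ← Complex.exp_add]; congr 1; push_cast; ring

lemma ephase_ne_zero (p : ℤ) (q : ℕ) (n : ℕ) : ephase p q n ≠ 0 := Complex.exp_ne_zero _

lemma ephase_star (p : ℤ) (q : ℕ) (n : ℕ) :
    star (ephase p q n) * ephase p q n = 1 := by
  rw [ephase, Complex.star_def, ← Complex.exp_conj, ← Complex.exp_add]
  have : (starRingEnd ℂ) (Complex.I * (n:ℂ) * γc p q) = -(Complex.I * (n:ℂ) * γc p q) := by
    rw [γc]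
    simp only [_root_.map_mul, Complex.conj_I, Complex.conj_natCast, Complex.conj_ofReal]
    ring
  rw [this, neg_add_cancel, Complex.exp_zero]

lemma ephase_q (p : ℤ) (q : ℕ) (hq : 0 < q) : ephase p q q = 1 := by
  rw [ephase]
  have hqne : (q:ℂ) ≠ 0 := Nat.cast_ne_zero.mpr hq.ne'
  have h : Complex.I * (q:ℂ) * γc p q = (p:ℂ) * (2 * (Real.pi:ℂ) * Complex.I) := by
    rw [γc]
    push_cast
    field_simp
  rw [h]
  exact_mod_cast Complex.exp_int_mul_two_pi_mul_I p

lemma ephase_pow (p : ℤ) (q : ℕ) (n : ℕ) : ephase p q n = (ephase p q 1) ^ n := by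
  induction n with
  | zero => simp [ephase_zero]
  | succ m ih => rw [pow_succ, ← ih, ← ephase_add]

lemma ephase_one_pow_q (p : ℤ) (q : ℕ) (hq : 0 < q) : (ephase p q 1) ^ q = 1 := by
  rw [← ephase_pow, ephase_q p q hq]

lemma ephase_dvd (p : ℤ) (q : ℕ) (hq : 0 < q) (hpq : Int.gcd p (q : ℤ) = 1)
    (n : ℕ) (h : (ephase p q 1) ^ n = 1) : q ∣ n := by
  rw [← ephase_pow, ephase, Complex.exp_eq_one_iff] at h
  obtain ⟨k, hk⟩ := h
  have h2 : (n:ℂ) * γc p q = (k:ℂ) * (2 * (Real.pi:ℂ)) := by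
    apply mul_left_cancel₀ Complex.I_ne_zero
    linear_combination hk
  rw [γc] at h2
  have h3 : (n:ℝ) * (2 * Real.pi * (p:ℝ) / (q:ℝ)) = (k:ℝ) * (2 * Real.pi) := by
    exact_mod_cast h2
  have hqne : (q:ℝ) ≠ 0 := Nat.cast_ne_zero.mpr hq.ne'
  have h4 : (n:ℝ) * (p:ℝ) = (k:ℝ) * (q:ℝ) := by
    field_simp at h3
    nlinarith [h3, Real.pi_pos]
  have h5 : (n:ℤ) * p = k * q := by exact_mod_cast h4
  have hco : IsCoprime (q:ℤ) p := by
    rw [Int.isCoprime_iff_gcd_eq_one, Int.gcd_comm]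
    exact hpq
  have hdvd : (q:ℤ) ∣ (n:ℤ) * p := ⟨k, by linarith [h5]⟩
  have := hco.dvd_of_dvd_mul_right hdvd
  exact_mod_cast this

lemma ephase_succ_mod (p : ℤ) (q : ℕ) (hq : 0 < q) (j : Fin q) :
    ephase p q (((j:ℕ) + 1) % q) = ephase p q 1 * ephase p q (j:ℕ) := by
  have hle : (j:ℕ) + 1 ≤ q := j.isLt
  have heq : ephase p q 1 * ephase p q (j:ℕ) = ephase p q ((j:ℕ) + 1) := by
    rw [add_comm, ephase_add]
  rcases lt_or_eq_of_le hle with h | h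
  · rw [Nat.mod_eq_of_lt h, add_comm ((j:ℕ)) 1, ephase_add]
  · rw [h, Nat.mod_self, ephase_zero, heq, h, ephase_q p q hq]

/-! #### Matrix relations -/

lemma KJ_rel (p : ℤ) (q : ℕ) (hq : 0 < q) :
    Kmat q * Jmat p q = ephase p q 1 • (Jmat p q * Kmat q) := by
  rw [Jmat_diag]
  ext j k
  rw [Matrix.smul_apply, Matrix.mul_diagonal, Matrix.diagonal_mul]
  by_cases h : ((j:ℕ) + 1) % q = (k:ℕ)
  · simp only [Kmat, Matrix.of_apply, if_pos h, mul_one, one_mul, smul_eq_mul]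
    rw [← h, ephase_succ_mod p q hq]
  · simp [Kmat, h]

lemma JKt_rel (p : ℤ) (q : ℕ) (hq : 0 < q) :
    Jmat p q * (Kmat q)ᴴ = ephase p q 1 • ((Kmat q)ᴴ * Jmat p q) := by
  rw [Jmat_diag]
  ext j k
  rw [Matrix.smul_apply, Matrix.mul_diagonal, Matrix.diagonal_mul]
  by_cases h : ((k:ℕ) + 1) % q = (j:ℕ)
  · simp only [Kmat, Matrix.conjTranspose_apply, Matrix.of_apply, if_pos h, smul_eq_mul,
      star_one, mul_one, one_mul]
    rw [← h, ephase_succ_mod p q hq]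
  · simp [Kmat, Matrix.conjTranspose_apply, h]

lemma KJt_rel (p : ℤ) (q : ℕ) (hq : 0 < q) :
    ephase p q 1 • (Kmat q * (Jmat p q)ᴴ) = (Jmat p q)ᴴ * Kmat q := by
  rw [Jmat_diag, Matrix.diagonal_conjTranspose]
  ext j k
  rw [Matrix.smul_apply, Matrix.mul_diagonal, Matrix.diagonal_mul]
  by_cases h : ((j:ℕ) + 1) % q = (k:ℕ)
  · simp only [Kmat, Matrix.of_apply, if_pos h, mul_one, one_mul, smul_eq_mul,
      Pi.star_apply]
    have hk : ephase p q (k:ℕ) = ephase p q 1 * ephase p q (j:ℕ) := by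
      rw [← h, ephase_succ_mod p q hq]
    have hstar := congrArg star hk
    rw [star_mul'] at hstar
    rw [hstar]
    have h1 := ephase_star p q 1
    calc ephase p q 1 * (star (ephase p q 1) * star (ephase p q (j:ℕ)))
        = (star (ephase p q 1) * ephase p q 1) * star (ephase p q (j:ℕ)) := by ring
      _ = star (ephase p q (j:ℕ)) := by rw [h1, one_mul]
  · simp [Kmat, h]

lemma JJt (p : ℤ) (q : ℕ) : Jmat p q * (Jmat p q)ᴴ = 1 := by
  rw [Jmat_diag, Matrix.diagonal_conjTranspose, Matrix.diagonal_mul_diagonal]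
  have : ∀ j : Fin q, ephase p q (j:ℕ) * star (ephase p q (j:ℕ)) = 1 := by
    intro j
    rw [mul_comm]
    exact ephase_star p q (j:ℕ)
  simp only [Pi.star_apply]
  rw [show (fun i : Fin q => ephase p q (i:ℕ) * star (ephase p q (i:ℕ))) = fun _ => 1 from
    funext fun j => this j]
  exact Matrix.diagonal_one

lemma JtJ (p : ℤ) (q : ℕ) : (Jmat p q)ᴴ * Jmat p q = 1 := by
  rw [Jmat_diag, Matrix.diagonal_conjTranspose, Matrix.diagonal_mul_diagonal]
  simp only [Pi.star_apply]
  rw [show (fun i : Fin q => star (ephase p q (i:ℕ)) * ephase p q (i:ℕ)) = fun _ => 1 from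
    funext fun j => ephase_star p q (j:ℕ)]
  exact Matrix.diagonal_one

lemma Kmat_eq_permMatrix (n : ℕ) :
    Kmat (n+1) = (finRotate (n+1)).permMatrix ℂ := by
  ext j k
  have hval : ((j + (1 : Fin (n+1)) : Fin (n+1)) : ℕ) = ((j:ℕ) + 1) % (n+1) := by
    rw [Fin.val_add, Fin.val_one', Nat.add_mod (j:ℕ) (1 % (n+1)),
      Nat.mod_mod_of_dvd _ dvd_rfl, ← Nat.add_mod]
  have hiff : ((j:ℕ) + 1) % (n+1) = (k:ℕ) ↔ (j + 1 = k) := by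
    rw [Fin.ext_iff, hval]
  rw [Kmat, Matrix.of_apply, Equiv.Perm.permMatrix, PEquiv.toMatrix_apply,
    Equiv.toPEquiv_apply, finRotate_succ_apply]
  by_cases h : ((j:ℕ) + 1) % (n+1) = (k:ℕ)
  · rw [if_pos h, if_pos (by simp [Option.mem_def, (hiff.mp h).symm])]
  · rw [if_neg h, if_neg (by simp [Option.mem_def]; exact fun hc => h (hiff.mpr hc))]

lemma Kmat_conjTranspose (q : ℕ) : (Kmat q)ᴴ = (Kmat q)ᵀ := by
  ext j k
  simp [Kmat, Matrix.conjTranspose_apply, Matrix.transpose_apply, apply_ite (starRingEnd ℂ)]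

lemma Kmat_mul_conjTranspose (n : ℕ) : Kmat (n+1) * (Kmat (n+1))ᴴ = 1 := by
  rw [Kmat_conjTranspose, Kmat_eq_permMatrix]
  rw [Equiv.Perm.permMatrix, ← PEquiv.toMatrix_symm, ← Equiv.toPEquiv_symm,
    ← PEquiv.toMatrix_trans, ← Equiv.toPEquiv_trans]
  simp

lemma Kmat_conjTranspose_mul (n : ℕ) : (Kmat (n+1))ᴴ * Kmat (n+1) = 1 := by
  rw [Kmat_conjTranspose, Kmat_eq_permMatrix]
  rw [Equiv.Perm.permMatrix, ← PEquiv.toMatrix_symm, ← Equiv.toPEquiv_symm,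
    ← PEquiv.toMatrix_trans, ← Equiv.toPEquiv_trans]
  simp

lemma Kmat_det (n : ℕ) : (Kmat (n+1)).det = (-1 : ℂ) ^ n := by
  rw [Kmat_eq_permMatrix, Matrix.det_permutation, sign_finRotate]
  simp

lemma Kmat_det_conjTranspose (n : ℕ) : ((Kmat (n+1))ᴴ).det = (-1 : ℂ) ^ n := by
  rw [Kmat_conjTranspose, Matrix.det_transpose, Kmat_det]

/-! #### Determinant of `Jmat` -/

lemma Jmat_det (p : ℤ) (n : ℕ) (hpq : Int.gcd p ((n+1 : ℕ) : ℤ) = 1) :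
    (Jmat p (n+1)).det = (-1 : ℂ) ^ n := by
  set q : ℕ := n + 1 with hqdef
  have hq : 0 < q := Nat.succ_pos n
  rw [Jmat_diag, Matrix.det_diagonal]
  have hsum : ∀ j : Fin q, ephase p q (j:ℕ) = (ephase p q 1) ^ (j:ℕ) := fun j =>
    ephase_pow p q (j:ℕ)
  rw [Finset.prod_congr rfl (fun j _ => hsum j), Finset.prod_pow_eq_pow_sum]
  set N : ℕ := ∑ j : Fin q, (j:ℕ) with hN
  have h2N : 2 * N = n * (n + 1) := by
    rw [hN, Fin.sum_univ_eq_sum_range (fun i => i) q]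
    have hg : (∑ i ∈ Finset.range (n+1), i) * 2 = (n+1) * n := by
      have := Finset.sum_range_id_mul_two (n+1)
      simpa using this
    calc 2 * ∑ i ∈ Finset.range q, i = (∑ i ∈ Finset.range (n+1), i) * 2 := by
          rw [hqdef, mul_comm]
      _ = (n+1) * n := hg
      _ = n * (n+1) := by rw [mul_comm]
  rw [← ephase_pow]
  have h2Nr : 2 * (N:ℝ) = (n:ℝ) * ((n:ℝ) + 1) := by exact_mod_cast h2N
  have hq1 : ((n:ℝ) + 1) ≠ 0 := by positivity
  have hreal : (N:ℝ) * (2 * Real.pi * (p:ℝ) / ((n:ℝ)+1)) = (p:ℝ) * (n:ℝ) * Real.pi := by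
    field_simp
    linear_combination (p:ℝ) * h2Nr
  have key : Complex.I * (N:ℂ) * γc p q = ((p * (n:ℤ) : ℤ):ℂ) * ((Real.pi:ℂ) * Complex.I) := by
    rw [γc]
    have : ((2 * Real.pi * (p:ℝ) / ((q:ℕ):ℝ) : ℝ) : ℂ)
        = (((2 * Real.pi * (p:ℝ) / ((n:ℝ)+1)) : ℝ) : ℂ) := by
      norm_num [hqdef]
    rw [this]
    have hNc : (N:ℂ) * (((2 * Real.pi * (p:ℝ) / ((n:ℝ)+1)) : ℝ) : ℂ)
        = (((p:ℝ) * (n:ℝ) * Real.pi : ℝ) : ℂ) := by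
      rw [show ((N:ℕ):ℂ) = (((N:ℕ):ℝ):ℂ) by push_cast; ring, ← Complex.ofReal_mul, hreal]
    calc Complex.I * (N:ℂ) * (((2 * Real.pi * (p:ℝ) / ((n:ℝ)+1)) : ℝ) : ℂ)
        = Complex.I * ((N:ℂ) * (((2 * Real.pi * (p:ℝ) / ((n:ℝ)+1)) : ℝ) : ℂ)) := by ring
      _ = Complex.I * (((p:ℝ) * (n:ℝ) * Real.pi : ℝ) : ℂ) := by rw [hNc]
      _ = ((p * (n:ℤ) : ℤ):ℂ) * ((Real.pi:ℂ) * Complex.I) := by push_cast; ring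
  rw [ephase, key, Complex.exp_int_mul, Complex.exp_pi_mul_I]
  rcases Int.even_or_odd (p * (n:ℤ)) with he | ho
  · rw [he.neg_one_zpow]
    rcases (Int.even_mul.mp he) with hp | hn
    · by_cases hne : Even n
      · rw [hne.neg_one_pow]
      · exfalso
        have hno : n % 2 = 1 := Nat.odd_iff.mp (Nat.not_even_iff_odd.mp hne)
        have hq2 : 2 ∣ q := by omega
        have h2q : (2:ℤ) ∣ ((q:ℕ):ℤ) := by exact_mod_cast Int.natCast_dvd_natCast.mpr hq2
        have h2p : (2:ℤ) ∣ p := hp.two_dvd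
        have := Int.dvd_gcd h2p h2q
        rw [hpq] at this
        norm_num at this
    · have : Even ((n:ℤ)) := hn
      have hnn : Even n := by exact_mod_cast this
      rw [hnn.neg_one_pow]
  · rw [ho.neg_one_zpow]
    have hodd : Odd ((n:ℤ)) := (Int.odd_mul.mp ho).2
    have hnn : Odd n := by exact_mod_cast hodd
    rw [hnn.neg_one_pow]

/-! #### The key round lemma -/

lemma key_round (hq : 0 < q) (A B C0 U : Matrix (Fin q) (Fin q) ℂ) (u κ : ℂ) (θ : ℝ)
    (huq : u ^ q = 1) (hdvd : ∀ m : ℕ, u ^ m = 1 → q ∣ m) (hU : IsUnit U.det)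
    (hA : U * A = u • (A * U)) (hB : U * B = B * U) (hC : u • (U * C0) = C0 * U)
    (hc0 : C0.det = κ) (hc2 : A.det = κ) :
    ((Complex.exp (Complex.I * θ)) ^ 2 • A + (Complex.exp (Complex.I * θ)) • B + C0).det
      = (Complex.exp (Complex.I * θ)) ^ q *
        (((triPoly A B C0).det.coeff q)
          + κ * (2 * ((Real.cos ((q:ℝ) * θ) : ℝ) : ℂ))) := by
  set z : ℂ := Complex.exp (Complex.I * θ) with hz
  set P : Polynomial ℂ := (triPoly A B C0).det with hP
  have hsym : ∀ w : ℂ, P.eval (u * w) = P.eval w := by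
    intro w
    rw [hP, eval_det_triPoly, eval_det_triPoly]
    exact det_conj_smul hU huq hA hB hC w
  have hvan : ∀ m : ℕ, ¬ q ∣ m → P.coeff m = 0 := fun m hm =>
    coeff_eq_zero_of_symm hsym hdvd hm
  have h3 := eval_eq_three_terms hq (natDegree_det_triPoly A B C0) hvan z
  rw [hP]
  rw [← eval_det_triPoly A B C0 z, h3, coeff_det_triPoly_zero, coeff_det_triPoly_top, hc0, hc2]
  -- now pure scalar identity
  set c : ℂ := ((q:ℕ):ℂ) * (θ:ℂ) with hc
  have hw : z ^ q = Complex.exp (Complex.I * c) := by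
    rw [hz, ← Complex.exp_nat_mul]
    congr 1
    rw [hc]
    push_cast
    ring
  have hwinv : Complex.exp (-(Complex.I * c)) = (z ^ q)⁻¹ := by
    rw [hw, ← Complex.exp_neg]
  have hcos : ((Real.cos ((q:ℝ) * θ) : ℝ) : ℂ)
      = (Complex.exp (Complex.I * c) + Complex.exp (-(Complex.I * c))) / 2 := by
    have h1 : (((q:ℝ) * θ : ℝ) : ℂ) * Complex.I = Complex.I * c := by
      rw [hc]; push_cast; ring
    have h2 : -(((q:ℝ) * θ : ℝ) : ℂ) * Complex.I = -(Complex.I * c) := by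
      rw [hc]; push_cast; ring
    rw [Complex.ofReal_cos, Complex.cos, h1, h2]
  have hzq : z ^ (2 * q) = (z ^ q) ^ 2 := by rw [← pow_mul, mul_comm]
  have hne : z ^ q ≠ 0 := pow_ne_zero _ (Complex.exp_ne_zero _)
  rw [hzq, hcos, hwinv, ← hw]
  field_simp
  ring

/-! #### Splitting the Harper matrix -/

def A1 (p : ℤ) (q : ℕ) : Matrix (Fin q) (Fin q) ℂ := (1/2 : ℂ) • Jmat p q
def C1 (p : ℤ) (q : ℕ) : Matrix (Fin q) (Fin q) ℂ := (1/2 : ℂ) • (Jmat p q)ᴴ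
def A2 (q : ℕ) : Matrix (Fin q) (Fin q) ℂ := (1/2 : ℂ) • Kmat q
def C2 (q : ℕ) : Matrix (Fin q) (Fin q) ℂ := (1/2 : ℂ) • (Kmat q)ᴴ
def B1 (q : ℕ) (θ₂ : ℝ) (l : ℂ) : Matrix (Fin q) (Fin q) ℂ :=
  Complex.exp (Complex.I * (θ₂:ℂ)) • A2 q + Complex.exp (-(Complex.I) * (θ₂:ℂ)) • C2 q - l • 1
def B2 (p : ℤ) (q : ℕ) (θ₁ : ℝ) (l : ℂ) : Matrix (Fin q) (Fin q) ℂ :=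
  Complex.exp (Complex.I * (θ₁:ℂ)) • A1 p q + Complex.exp (-(Complex.I) * (θ₁:ℂ)) • C1 p q - l • 1

lemma exp_mul_exp_neg (θ : ℝ) :
    Complex.exp (Complex.I * (θ:ℂ)) * Complex.exp (-(Complex.I) * (θ:ℂ)) = 1 := by
  rw [← Complex.exp_add, show Complex.I * (θ:ℂ) + -(Complex.I) * (θ:ℂ) = 0 by ring,
    Complex.exp_zero]

lemma split1 (p : ℤ) (q : ℕ) (θ₁ θ₂ : ℝ) (l : ℂ) :
    (Complex.exp (Complex.I * (θ₁:ℂ))) ^ 2 • A1 p q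
      + (Complex.exp (Complex.I * (θ₁:ℂ))) • B1 q θ₂ l + C1 p q
    = Complex.exp (Complex.I * (θ₁:ℂ)) • (MH p q θ₁ θ₂ - l • 1) := by
  have hz := exp_mul_exp_neg θ₁
  unfold MH A1 B1 C1 A2 C2
  ext i j
  simp only [Matrix.smul_apply, Matrix.sub_apply, Matrix.add_apply, smul_eq_mul,
    Matrix.one_apply]
  linear_combination (-((Jmat p q)ᴴ i j) / 2) * hz

lemma split2 (p : ℤ) (q : ℕ) (θ₁ θ₂ : ℝ) (l : ℂ) :
    (Complex.exp (Complex.I * (θ₂:ℂ))) ^ 2 • A2 q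
      + (Complex.exp (Complex.I * (θ₂:ℂ))) • B2 p q θ₁ l + C2 q
    = Complex.exp (Complex.I * (θ₂:ℂ)) • (MH p q θ₁ θ₂ - l • 1) := by
  have hz := exp_mul_exp_neg θ₂
  unfold MH B2 A1 C1 A2 C2
  ext i j
  simp only [Matrix.smul_apply, Matrix.sub_apply, Matrix.add_apply, smul_eq_mul,
    Matrix.one_apply]
  linear_combination (-((Kmat q)ᴴ i j) / 2) * hz

lemma exists_f {m : ℕ} (hm : 0 < m) (M0 : Matrix (Fin m) (Fin m) ℂ) (hherm : M0ᴴ = M0) :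
    ∃ f : Polynomial ℝ, f.degree = m ∧
      ∀ l : ℂ, (Polynomial.aeval l) f = Matrix.det (M0 - l • 1) := by
  classical
  set G : Polynomial ℂ := Polynomial.C ((-1:ℂ) ^ m) * M0.charpoly with hG
  have hcard : Fintype.card (Fin m) = m := Fintype.card_fin m
  have hGeval : ∀ l : ℂ, G.eval l = Matrix.det (M0 - l • 1) := by
    intro l
    rw [hG, Polynomial.eval_mul, Polynomial.eval_C, Matrix.charpoly]
    have h := RingHom.map_det (Polynomial.evalRingHom l) (Matrix.charmatrix M0)
    simp only [Polynomial.coe_evalRingHom] at h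
    rw [h]
    have hmap : (Polynomial.evalRingHom l).mapMatrix (Matrix.charmatrix M0) = l • 1 - M0 := by
      ext i j
      by_cases hij : i = j
      · subst hij
        simp [Matrix.charmatrix_apply_eq, Matrix.smul_apply, Matrix.one_apply_eq,
          Matrix.sub_apply]
      · simp [Matrix.charmatrix_apply_ne _ _ _ hij, hij, Matrix.sub_apply,
          Matrix.smul_apply, Matrix.one_apply_ne hij]
    rw [hmap, show M0 - l • 1 = -(l • 1 - M0) by rw [neg_sub], Matrix.det_neg, hcard]
  have hGdeg : G.degree = (m : ℕ) := by
    rw [hG, Polynomial.degree_C_mul (pow_ne_zero _ (neg_ne_zero.mpr one_ne_zero)),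
      Matrix.charpoly_degree_eq_dim, hcard]
  have hM0sub : ∀ x : ℝ, (M0 - ((x:ℂ)) • 1)ᴴ = M0 - ((x:ℂ)) • 1 := by
    intro x
    rw [Matrix.conjTranspose_sub, hherm, Matrix.conjTranspose_smul, Matrix.conjTranspose_one]
    congr 1
    simp [Complex.conj_ofReal]
  have hpt : ∀ x : ℝ, (G.map (starRingEnd ℂ)).eval ((x:ℂ)) = G.eval ((x:ℂ)) := by
    intro x
    have h1 : (G.map (starRingEnd ℂ)).eval ((starRingEnd ℂ) ((x:ℂ)))
        = (starRingEnd ℂ) (G.eval ((x:ℂ))) := by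
      rw [Polynomial.eval_map, Polynomial.eval₂_at_apply]
    rw [Complex.conj_ofReal] at h1
    rw [h1, hGeval]
    have h2 : star (Matrix.det (M0 - ((x:ℂ)) • 1)) = Matrix.det (M0 - ((x:ℂ)) • 1) := by
      rw [← Matrix.det_conjTranspose, hM0sub x]
    exact h2
  have hconj : G.map (starRingEnd ℂ) = G := by
    have hsub : G.map (starRingEnd ℂ) - G = 0 := by
      apply Polynomial.eq_zero_of_infinite_isRoot
      have hss : Set.range (fun x : ℝ => (x:ℂ))
          ⊆ {x : ℂ | (G.map (starRingEnd ℂ) - G).IsRoot x} := by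
        rintro z ⟨x, rfl⟩
        simp only [Set.mem_setOf_eq, Polynomial.IsRoot, Polynomial.eval_sub, hpt x, sub_self]
      exact Set.Infinite.mono hss (Set.infinite_range_of_injective Complex.ofReal_injective)
    exact sub_eq_zero.mp hsub
  have hGc : ∀ k : ℕ, ((G.coeff k).re : ℂ) = G.coeff k := by
    intro k
    have h1 : (starRingEnd ℂ) (G.coeff k) = G.coeff k := by
      rw [← Polynomial.coeff_map, hconj]
    exact Complex.conj_eq_iff_re.mp h1
  set f : Polynomial ℝ := ∑ k ∈ G.support, Polynomial.monomial k ((G.coeff k).re) with hf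
  have hmapf : f.map (algebraMap ℝ ℂ) = G := by
    rw [hf]
    calc (∑ k ∈ G.support, Polynomial.monomial k ((G.coeff k).re)).map (algebraMap ℝ ℂ)
        = ∑ k ∈ G.support, Polynomial.monomial k (((G.coeff k).re : ℂ)) := by
          rw [Polynomial.map_sum]
          exact Finset.sum_congr rfl fun k _ => by
            rw [Polynomial.map_monomial]
            norm_num
      _ = ∑ k ∈ G.support, Polynomial.monomial k (G.coeff k) :=
          Finset.sum_congr rfl fun k _ => by rw [hGc k]
      _ = G := (Polynomial.as_sum_support G).symm
  refine ⟨f, ?_, ?_⟩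
  · rw [← hGdeg, ← hmapf, Polynomial.degree_map_eq_of_injective (algebraMap ℝ ℂ).injective]
  · intro l
    rw [Polynomial.aeval_def, Polynomial.eval₂_eq_eval_map, hmapf, hGeval]

end Chambers

theorem stmt_3 (p : ℤ) (q : ℕ) (hq : 0 < q) (hpq : Int.gcd p (q : ℤ) = 1) :
    ∃ f : Polynomial ℝ, f.degree = q ∧
      ∀ (θ₁ θ₂ : ℝ) (l : ℂ),
        Matrix.det (MH p q θ₁ θ₂ - l • (1 : Matrix (Fin q) (Fin q) ℂ)) =
          Polynomial.aeval l f
            + (-1 : ℂ) ^ (q + 1) * (2 : ℂ) ^ ((1 : ℤ) - (q : ℤ)) *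
              (((Real.cos (q * θ₁) + Real.cos (q * θ₂)) : ℝ) : ℂ) := by
  classical
  obtain ⟨n, rfl⟩ : ∃ n, q = n + 1 := ⟨q - 1, by omega⟩
  set ω : ℂ := Chambers.ephase p (n+1) 1 with hω
  have hωq : ω ^ (n+1) = 1 := Chambers.ephase_one_pow_q p (n+1) hq
  have hωdvd : ∀ m : ℕ, ω ^ m = 1 → (n+1) ∣ m := fun m hm =>
    Chambers.ephase_dvd p (n+1) hq hpq m hm
  have hωne : ω ≠ 0 := Chambers.ephase_ne_zero p (n+1) 1
  have hωinvq : (ω⁻¹) ^ (n+1) = 1 := by rw [inv_pow, hωq, inv_one]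
  have hωinvdvd : ∀ m : ℕ, (ω⁻¹) ^ m = 1 → (n+1) ∣ m := by
    intro m hm
    apply hωdvd
    rwa [inv_pow, inv_eq_one] at hm
  set sgn : ℂ := (-1 : ℂ) ^ n with hsgn
  set κ : ℂ := (1/2 : ℂ) ^ (n+1) * sgn with hκ
  have hcard : Fintype.card (Fin (n+1)) = n + 1 := Fintype.card_fin (n+1)
  have hdetJ : (Jmat p (n+1)).det = sgn := Chambers.Jmat_det p n hpq
  have hdetJt : ((Jmat p (n+1))ᴴ).det = sgn := by
    rw [Matrix.det_conjTranspose, hdetJ, hsgn]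
    simp
  have hdetK : (Kmat (n+1)).det = sgn := Chambers.Kmat_det n
  have hdetKt : ((Kmat (n+1))ᴴ).det = sgn := Chambers.Kmat_det_conjTranspose n
  have hdetA1 : (Chambers.A1 p (n+1)).det = κ := by
    rw [Chambers.A1, Matrix.det_smul, hcard, hdetJ, hκ]
  have hdetC1 : (Chambers.C1 p (n+1)).det = κ := by
    rw [Chambers.C1, Matrix.det_smul, hcard, hdetJt, hκ]
  have hdetA2 : (Chambers.A2 (n+1)).det = κ := by
    rw [Chambers.A2, Matrix.det_smul, hcard, hdetK, hκ]
  have hdetC2 : (Chambers.C2 (n+1)).det = κ := by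
    rw [Chambers.C2, Matrix.det_smul, hcard, hdetKt, hκ]
  have hU1 : IsUnit (Kmat (n+1)).det := by
    rw [hdetK, hsgn]
    exact isUnit_iff_ne_zero.mpr (pow_ne_zero _ (neg_ne_zero.mpr one_ne_zero))
  have hU2 : IsUnit (Jmat p (n+1)).det := by
    rw [hdetJ, hsgn]
    exact isUnit_iff_ne_zero.mpr (pow_ne_zero _ (neg_ne_zero.mpr one_ne_zero))
  -- commutation relations, round 1 (conjugation by K)
  have hA1 : Kmat (n+1) * Chambers.A1 p (n+1) = ω • (Chambers.A1 p (n+1) * Kmat (n+1)) := by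
    rw [Chambers.A1, Matrix.mul_smul, Matrix.smul_mul, Chambers.KJ_rel p (n+1) hq, smul_comm]
  have hC1 : ω • (Kmat (n+1) * Chambers.C1 p (n+1)) = Chambers.C1 p (n+1) * Kmat (n+1) := by
    rw [Chambers.C1, Matrix.mul_smul, Matrix.smul_mul, smul_comm,
      Chambers.KJt_rel p (n+1) hq]
  have hB1 : ∀ (θb : ℝ) (l : ℂ),
      Kmat (n+1) * Chambers.B1 (n+1) θb l = Chambers.B1 (n+1) θb l * Kmat (n+1) := by
    intro θb l
    simp only [Chambers.B1, Chambers.A2, Chambers.C2, Matrix.mul_sub, Matrix.sub_mul,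
      Matrix.mul_add, Matrix.add_mul, Matrix.mul_smul, Matrix.smul_mul, Matrix.mul_one,
      Matrix.one_mul, Chambers.Kmat_mul_conjTranspose, Chambers.Kmat_conjTranspose_mul]
  -- commutation relations, round 2 (conjugation by J)
  have hJK : Jmat p (n+1) * Kmat (n+1) = ω⁻¹ • (Kmat (n+1) * Jmat p (n+1)) := by
    rw [Chambers.KJ_rel p (n+1) hq, smul_smul, inv_mul_cancel₀ hωne, one_smul]
  have hA2 : Jmat p (n+1) * Chambers.A2 (n+1) = ω⁻¹ • (Chambers.A2 (n+1) * Jmat p (n+1)) := by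
    rw [Chambers.A2, Matrix.mul_smul, Matrix.smul_mul, hJK, smul_comm]
  have hC2 : ω⁻¹ • (Jmat p (n+1) * Chambers.C2 (n+1)) = Chambers.C2 (n+1) * Jmat p (n+1) := by
    rw [Chambers.C2, Matrix.mul_smul, smul_comm, Chambers.JKt_rel p (n+1) hq, ← hω,
      smul_smul, smul_smul, Matrix.smul_mul,
      show (1/2 * ω⁻¹ * ω : ℂ) = 1/2 by field_simp]
  have hB2 : ∀ (θa : ℝ) (l : ℂ),
      Jmat p (n+1) * Chambers.B2 p (n+1) θa l = Chambers.B2 p (n+1) θa l * Jmat p (n+1) := by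
    intro θa l
    simp only [Chambers.B2, Chambers.A1, Chambers.C1, Matrix.mul_sub, Matrix.sub_mul,
      Matrix.mul_add, Matrix.add_mul, Matrix.mul_smul, Matrix.smul_mul, Matrix.mul_one,
      Matrix.one_mul, Chambers.JJt, Chambers.JtJ]
  -- the two rounds
  have R1 : ∀ (θa θb : ℝ) (l : ℂ),
      Matrix.det (MH p (n+1) θa θb - l • 1)
        = ((Chambers.triPoly (Chambers.A1 p (n+1)) (Chambers.B1 (n+1) θb l)
            (Chambers.C1 p (n+1))).det.coeff (n+1))
          + κ * (2 * ((Real.cos (((n+1:ℕ):ℝ) * θa) : ℝ) : ℂ)) := by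
    intro θa θb l
    have hk := Chambers.key_round hq (Chambers.A1 p (n+1)) (Chambers.B1 (n+1) θb l)
      (Chambers.C1 p (n+1)) (Kmat (n+1)) ω κ θa hωq hωdvd hU1 hA1 (hB1 θb l) hC1 hdetC1 hdetA1
    rw [Chambers.split1 p (n+1) θa θb l, Matrix.det_smul, hcard] at hk
    exact mul_left_cancel₀ (pow_ne_zero _ (Complex.exp_ne_zero _)) hk
  have R2 : ∀ (θa θb : ℝ) (l : ℂ),
      Matrix.det (MH p (n+1) θa θb - l • 1)
        = ((Chambers.triPoly (Chambers.A2 (n+1)) (Chambers.B2 p (n+1) θa l)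
            (Chambers.C2 (n+1))).det.coeff (n+1))
          + κ * (2 * ((Real.cos (((n+1:ℕ):ℝ) * θb) : ℝ) : ℂ)) := by
    intro θa θb l
    have hk := Chambers.key_round hq (Chambers.A2 (n+1)) (Chambers.B2 p (n+1) θa l)
      (Chambers.C2 (n+1)) (Jmat p (n+1)) ω⁻¹ κ θb hωinvq hωinvdvd hU2 hA2 (hB2 θa l) hC2
      hdetC2 hdetA2
    rw [Chambers.split2 p (n+1) θa θb l, Matrix.det_smul, hcard] at hk
    exact mul_left_cancel₀ (pow_ne_zero _ (Complex.exp_ne_zero _)) hk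
  -- reference angle
  set θ0 : ℝ := Real.pi / (2 * ((n+1:ℕ):ℝ)) with hθ0
  have hcos0 : Real.cos (((n+1:ℕ):ℝ) * θ0) = 0 := by
    have hne : ((n+1:ℕ):ℝ) ≠ 0 := by positivity
    rw [hθ0, show ((n+1:ℕ):ℝ) * (Real.pi / (2 * ((n+1:ℕ):ℝ))) = Real.pi / 2 by
      field_simp]
    exact Real.cos_pi_div_two
  -- the Hermitian reference matrix and the real polynomial f
  have hstar1 : ∀ θ : ℝ, star (Complex.exp (Complex.I * (θ:ℂ)))
      = Complex.exp (-(Complex.I) * (θ:ℂ)) := by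
    intro θ
    rw [Complex.star_def, ← Complex.exp_conj]
    congr 1
    simp [Complex.conj_I, Complex.conj_ofReal]
  have hstar2 : ∀ θ : ℝ, star (Complex.exp (-(Complex.I) * (θ:ℂ)))
      = Complex.exp (Complex.I * (θ:ℂ)) := by
    intro θ
    rw [Complex.star_def, ← Complex.exp_conj]
    congr 1
    simp [Complex.conj_I, Complex.conj_ofReal]
  have hherm : (MH p (n+1) θ0 θ0)ᴴ = MH p (n+1) θ0 θ0 := by
    unfold MH
    rw [Matrix.conjTranspose_smul, Matrix.conjTranspose_add, Matrix.conjTranspose_add,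
      Matrix.conjTranspose_add, Matrix.conjTranspose_smul, Matrix.conjTranspose_smul,
      Matrix.conjTranspose_smul, Matrix.conjTranspose_smul, Matrix.conjTranspose_conjTranspose,
      Matrix.conjTranspose_conjTranspose, hstar1 θ0, hstar2 θ0]
    rw [show star (1/2 : ℂ) = (1/2 : ℂ) by simp]
    congr 1
    abel
  obtain ⟨f, hfdeg, haeval⟩ := Chambers.exists_f hq (MH p (n+1) θ0 θ0) hherm
  refine ⟨f, hfdeg, ?_⟩
  intro θ₁ θ₂ l
  have e1 := R1 θ₁ θ₂ l
  have e2 := R1 θ0 θ₂ l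
  have e3 := R2 θ0 θ₂ l
  have e4 := R2 θ0 θ0 l
  rw [hcos0, Complex.ofReal_zero] at e2 e4
  have hS : (-1 : ℂ) ^ ((n+1) + 1) * (2:ℂ) ^ ((1:ℤ) - (((n+1):ℕ):ℤ)) = κ * 2 := by
    have h1 : ((1:ℤ) - (((n+1):ℕ):ℤ)) = -(n:ℤ) := by push_cast; ring
    rw [h1, _root_.zpow_neg, zpow_natCast, hκ, hsgn]
    have h2 : ((2:ℂ)^n)⁻¹ ≠ 0 := inv_ne_zero (pow_ne_zero _ two_ne_zero)
    field_simp
    ring_nf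
    rw [mul_assoc, ← mul_pow]
    norm_num
  rw [haeval l, Complex.ofReal_add, hS]
  linear_combination e1 - e2 + e3 - e4
end
end

section
/- (Graphene reduction to the triangular model) Let p ∈ ℤ and q ∈ ℕ* be relatively prime, γ = 2πp/q. Let M_G(θ₁,θ₂) be the 2q×2q matrix with zero diagonal blocks, upper-right block A = I_q + e^{iθ₁} J_{p,q} + e^{iθ₂} K_q, and lower-left block A* = I_q + e^{-iθ₁} J_{p,q}* + e^{-iθ₂} K_q*. Then for all (θ₁,θ₂) ∈ ℝ² and all λ ∈ ℂ, det(M_G(θ₁,θ₂) - λ·I_{2q}) = (-1)^q det(M_T(θ₁,θ₂,0) + (3 - λ²)·I_q), where M_T(θ₁,θ₂,0) = e^{iθ₁} J_{p,q} + e^{-iθ₁} J_{p,q}* + e^{iθ₂} K_q + e^{-iθ₂} K_q* + e^{i(θ₁-θ₂)} J_{p,q} K_q* + e^{i(θ₂-θ₁)} K_q J_{p,q}*. -/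
noncomputable section

open Matrix Complex

/-- `A(θ₁,θ₂) = I_q + e^{iθ₁} J_{p,q} + e^{iθ₂} K_q`. -/
def Agr (p : ℤ) (q : ℕ) (θ₁ θ₂ : ℝ) : Matrix (Fin q) (Fin q) ℂ :=
  1 + Complex.exp (Complex.I * (θ₁ : ℂ)) • Jmat p q
    + Complex.exp (Complex.I * (θ₂ : ℂ)) • Kmat q

/-- The graphene matrix `M_G(θ₁,θ₂)` : the `2q × 2q` block matrix `[[0, A],[A*, 0]]`. -/
def MG (p : ℤ) (q : ℕ) (θ₁ θ₂ : ℝ) : Matrix (Fin q ⊕ Fin q) (Fin q ⊕ Fin q) ℂ :=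
  Matrix.fromBlocks 0 (Agr p q θ₁ θ₂) (Agr p q θ₁ θ₂)ᴴ 0

/-- The triangular Harper matrix at `φ = 0`. -/
def MT0 (p : ℤ) (q : ℕ) (θ₁ θ₂ : ℝ) : Matrix (Fin q) (Fin q) ℂ :=
  Complex.exp (Complex.I * (θ₁ : ℂ)) • Jmat p q
    + Complex.exp (-(Complex.I) * (θ₁ : ℂ)) • (Jmat p q)ᴴ
    + Complex.exp (Complex.I * (θ₂ : ℂ)) • Kmat q
    + Complex.exp (-(Complex.I) * (θ₂ : ℂ)) • (Kmat q)ᴴ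
    + Complex.exp (Complex.I * ((θ₁ - θ₂ : ℝ) : ℂ)) • (Jmat p q * (Kmat q)ᴴ)
    + Complex.exp (Complex.I * ((θ₂ - θ₁ : ℝ) : ℂ)) • (Kmat q * (Jmat p q)ᴴ)

lemma succ_mod_inj {q a b : ℕ} (ha : a < q) (hb : b < q) (h : (a+1) % q = (b+1) % q) :
    a = b := by
  rcases Nat.lt_or_ge (a+1) q with h1|h1 <;> rcases Nat.lt_or_ge (b+1) q with h2|h2
  · rw [Nat.mod_eq_of_lt h1, Nat.mod_eq_of_lt h2] at h; omega
  · have hb1 : b+1 = q := by omega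
    rw [Nat.mod_eq_of_lt h1, hb1, Nat.mod_self] at h; omega
  · have ha1 : a+1 = q := by omega
    rw [Nat.mod_eq_of_lt h2, ha1, Nat.mod_self] at h; omega
  · omega

lemma KKH (q : ℕ) (hq : 0 < q) : Kmat q * (Kmat q)ᴴ = 1 := by
  ext j k
  have hj : ((j : ℕ) + 1) % q < q := Nat.mod_lt _ hq
  have hk : ((k : ℕ) + 1) % q < q := Nat.mod_lt _ hq
  have hK : ∀ (a : Fin q) (ha : ((a:ℕ)+1) % q < q) (m : Fin q),
      Kmat q a m = if (⟨((a:ℕ)+1) % q, ha⟩ : Fin q) = m then 1 else 0 := by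
    intro a ha m
    simp [Kmat, Fin.ext_iff]
  rw [Matrix.mul_apply]
  simp only [conjTranspose_apply, hK j hj, hK k hk,
    mul_ite, mul_one, mul_zero, ite_mul, one_mul, zero_mul]
  rw [Finset.sum_ite_eq]
  simp only [Finset.mem_univ, if_true, Matrix.one_apply, apply_ite (star : ℂ → ℂ),
    star_one, star_zero]
  congr 1
  rw [eq_iff_iff, Fin.ext_iff]
  constructor
  · intro h
    exact (Fin.ext (succ_mod_inj k.isLt j.isLt h)).symm
  · intro h; simp [h]

lemma JJH (p : ℤ) (q : ℕ) : Jmat p q * (Jmat p q)ᴴ = 1 := by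
  rw [Jmat, diagonal_conjTranspose, diagonal_mul_diagonal]
  convert Matrix.diagonal_one with j
  simp only [Pi.star_apply, RCLike.star_def, ← Complex.exp_conj, ← Complex.exp_add]
  rw [← Complex.exp_zero]
  congr 1
  have : (starRingEnd ℂ) (Complex.I * ((j : ℕ) : ℂ) * ((2 * Real.pi * (p : ℝ) / (q : ℝ) : ℝ) : ℂ))
      = -(Complex.I * ((j : ℕ) : ℂ) * ((2 * Real.pi * (p : ℝ) / (q : ℝ) : ℝ) : ℂ)) := by
    simp only [_root_.map_mul, Complex.conj_I]
    rw [Complex.conj_ofReal, Complex.conj_natCast]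
    ring
  rw [this]; ring

lemma star_exp_I_real (θ : ℝ) :
    star (Complex.exp (Complex.I * (θ : ℂ))) = Complex.exp (-(Complex.I) * (θ : ℂ)) := by
  rw [RCLike.star_def, ← Complex.exp_conj]
  congr 1
  simp only [_root_.map_mul, Complex.conj_I, Complex.conj_ofReal]

lemma exp_mul_exp_neg (θ : ℝ) :
    Complex.exp (Complex.I * (θ : ℂ)) * Complex.exp (-(Complex.I) * (θ : ℂ)) = 1 := by
  rw [← Complex.exp_add]
  have : Complex.I * (θ : ℂ) + -(Complex.I) * (θ : ℂ) = 0 := by ring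
  rw [this, Complex.exp_zero]

lemma exp_neg_mul_exp (θ : ℝ) :
    Complex.exp (-(Complex.I) * (θ : ℂ)) * Complex.exp (Complex.I * (θ : ℂ)) = 1 := by
  rw [mul_comm]; exact exp_mul_exp_neg θ

lemma exp_mul_exp_sub (θ₁ θ₂ : ℝ) :
    Complex.exp (Complex.I * (θ₁ : ℂ)) * Complex.exp (-(Complex.I) * (θ₂ : ℂ))
      = Complex.exp (Complex.I * ((θ₁ - θ₂ : ℝ) : ℂ)) := by
  rw [← Complex.exp_add]
  congr 1
  push_cast
  ring

lemma exp_neg_mul_exp_sub (θ₁ θ₂ : ℝ) :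
    Complex.exp (-(Complex.I) * (θ₂ : ℂ)) * Complex.exp (Complex.I * (θ₁ : ℂ))
      = Complex.exp (Complex.I * ((θ₁ - θ₂ : ℝ) : ℂ)) := by
  rw [mul_comm]; exact exp_mul_exp_sub θ₁ θ₂

lemma AAH (p : ℤ) (q : ℕ) (hq : 0 < q) (θ₁ θ₂ : ℝ) :
    Agr p q θ₁ θ₂ * (Agr p q θ₁ θ₂)ᴴ = MT0 p q θ₁ θ₂ + (3 : ℂ) • 1 := by
  have hJ := JJH p q
  have hK := KKH q hq
  rw [Agr, MT0, conjTranspose_add, conjTranspose_add, conjTranspose_one,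
    conjTranspose_smul, conjTranspose_smul, star_exp_I_real, star_exp_I_real]
  simp only [Matrix.add_mul, Matrix.mul_add, Matrix.one_mul, Matrix.mul_one,
    Matrix.smul_mul, Matrix.mul_smul, smul_add, smul_smul, hJ, hK,
    exp_mul_exp_neg, exp_neg_mul_exp, exp_mul_exp_sub, exp_neg_mul_exp_sub]
  module

theorem stmt_5 (p : ℤ) (q : ℕ) (hq : 0 < q) (hpq : Int.gcd p (q : ℤ) = 1)
    (θ₁ θ₂ : ℝ) (l : ℂ) :
    Matrix.det (MG p q θ₁ θ₂ - l • (1 : Matrix (Fin q ⊕ Fin q) (Fin q ⊕ Fin q) ℂ)) =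
      (-1 : ℂ) ^ q *
        Matrix.det (MT0 p q θ₁ θ₂ + (3 - l ^ 2) • (1 : Matrix (Fin q) (Fin q) ℂ)) := by
  have key : ∀ l : ℂ, l ≠ 0 →
      Matrix.det (MG p q θ₁ θ₂ - l • (1 : Matrix (Fin q ⊕ Fin q) (Fin q ⊕ Fin q) ℂ)) =
      (-1 : ℂ) ^ q *
        Matrix.det (MT0 p q θ₁ θ₂ + (3 - l ^ 2) • (1 : Matrix (Fin q) (Fin q) ℂ)) := by
    intro l hl
    have hnl : (-l : ℂ) ≠ 0 := neg_ne_zero.2 hl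
    have hM : MG p q θ₁ θ₂ - l • (1 : Matrix (Fin q ⊕ Fin q) (Fin q ⊕ Fin q) ℂ)
        = Matrix.fromBlocks ((-l) • 1) (Agr p q θ₁ θ₂) (Agr p q θ₁ θ₂)ᴴ ((-l) • 1) := by
      ext i j
      rcases i with i | i <;> rcases j with j | j <;>
        simp [MG, Matrix.fromBlocks, Matrix.one_apply, Matrix.sub_apply, apply_ite (l • ·)] <;>
        split <;> simp
    haveI : Invertible ((-l) • (1 : Matrix (Fin q) (Fin q) ℂ)) := by
      apply Matrix.invertibleOfIsUnitDet
      rw [Matrix.det_smul, Matrix.det_one, mul_one, Fintype.card_fin]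
      exact (isUnit_iff_ne_zero.2 hnl).pow q
    have hinv : ⅟((-l) • (1 : Matrix (Fin q) (Fin q) ℂ)) = (-l)⁻¹ • 1 := by
      apply invOf_eq_right_inv
      rw [Matrix.smul_mul, Matrix.mul_smul, Matrix.mul_one, smul_smul,
        mul_inv_cancel₀ hnl, one_smul]
    rw [hM, Matrix.det_fromBlocks₂₂, hinv]
    have hBC : Agr p q θ₁ θ₂ * ((-l)⁻¹ • (1 : Matrix (Fin q) (Fin q) ℂ)) * (Agr p q θ₁ θ₂)ᴴ
        = (-l)⁻¹ • (MT0 p q θ₁ θ₂ + (3 : ℂ) • 1) := by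
      rw [Matrix.mul_smul, Matrix.mul_one, Matrix.smul_mul, AAH p q hq]
    rw [hBC]
    have hc : (-l : ℂ) = (-l)⁻¹ * l ^ 2 := by
      field_simp
    have hsplit : (-l) • (1 : Matrix (Fin q) (Fin q) ℂ)
          - (-l)⁻¹ • (MT0 p q θ₁ θ₂ + (3 : ℂ) • 1)
        = (-l)⁻¹ • (-(MT0 p q θ₁ θ₂ + (3 - l ^ 2) • 1)) := by
      calc (-l) • (1 : Matrix (Fin q) (Fin q) ℂ)
            - (-l)⁻¹ • (MT0 p q θ₁ θ₂ + (3 : ℂ) • 1)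
          = (-l)⁻¹ • ((l ^ 2) • (1 : Matrix (Fin q) (Fin q) ℂ))
            - (-l)⁻¹ • (MT0 p q θ₁ θ₂ + (3 : ℂ) • 1) := by rw [smul_smul, ← hc]
        _ = (-l)⁻¹ • ((l ^ 2) • (1 : Matrix (Fin q) (Fin q) ℂ)
            - (MT0 p q θ₁ θ₂ + (3 : ℂ) • 1)) := (smul_sub _ _ _).symm
        _ = (-l)⁻¹ • (-(MT0 p q θ₁ θ₂ + (3 - l ^ 2) • 1)) := by
            congr 1
            module
    rw [hsplit, Matrix.det_smul, Matrix.det_smul, Matrix.det_one, mul_one, Matrix.det_neg]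
    simp only [Fintype.card_fin]
    rw [← mul_assoc, ← mul_pow, mul_inv_cancel₀ hnl, one_pow, one_mul]
  rcases eq_or_ne l 0 with rfl | hl
  · have hf : Continuous fun z : ℂ =>
        Matrix.det (MG p q θ₁ θ₂ - z • (1 : Matrix (Fin q ⊕ Fin q) (Fin q ⊕ Fin q) ℂ)) :=
      Continuous.matrix_det (continuous_const.sub (continuous_id.smul continuous_const))
    have hg : Continuous fun z : ℂ => (-1 : ℂ) ^ q *
        Matrix.det (MT0 p q θ₁ θ₂ + (3 - z ^ 2) • (1 : Matrix (Fin q) (Fin q) ℂ)) :=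
      continuous_const.mul (Continuous.matrix_det (continuous_const.add
        (Continuous.smul (continuous_const.sub (continuous_pow 2)) continuous_const)))
    have heq := Continuous.ext_on (dense_compl_singleton (0 : ℂ)) hf hg
      (fun x hx => key x (by simpa using hx))
    exact congrFun heq 0
  · exact key l hl
end
end

section
/- Let p ∈ ℤ and q ∈ ℕ* be relatively prime, γ = 2πp/q. For all (θ₁,θ₂) ∈ ℝ² and all λ ∈ ℂ, det(-λ·I_q + e^{iθ₁} J_{p,q} + e^{iθ₂} K_q) = (-1)^q (λ^q - e^{iqθ₁} - e^{iqθ₂}). -/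
noncomputable section

open Matrix Complex

/-- scalar product formula over the roots of unity -/
lemma aux_prod_roots (q : ℕ) (hq : 0 < q) {ζ : ℂ} (hζ : IsPrimitiveRoot ζ q) (a x : ℂ) :
    ∏ i ∈ Finset.range q, (x - ζ ^ i * a) = x ^ q - a ^ q := by
  open Polynomial in
  have hm : (X ^ q - C (a ^ q) : ℂ[X]).Monic := monic_X_pow_sub_C _ hq.ne'
  have hroots : (X ^ q - C (a ^ q) : ℂ[X]).roots = (Multiset.range q).map (ζ ^ · * a) := by
    rw [← Polynomial.nthRoots]
    exact hζ.nthRoots_eq rfl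
  have h := Polynomial.prod_multiset_X_sub_C_of_monic_of_roots_card_eq hm
    (by rw [hroots, Multiset.card_map, Multiset.card_range, Polynomial.natDegree_X_pow_sub_C])
  have h2 := congrArg (Polynomial.eval x) h
  rw [Polynomial.eval_multiset_prod, hroots, Multiset.map_map] at h2
  simp only [Function.comp, Polynomial.eval_sub, Polynomial.eval_X, Polynomial.eval_C,
    Polynomial.eval_pow] at h2
  rw [← h2, Finset.prod_eq_multiset_prod]
  simp [Finset.range]

/-- gcd is preserved by emod -/
lemma aux_gcd_emod (p : ℤ) (q : ℕ) (h : Int.gcd p q = 1) : Int.gcd (p % q) q = 1 := by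
  have h3 : ((Int.gcd (p % q) q : ℤ)) ∣ (q : ℤ) := Int.gcd_dvd_right _ _
  have hd : ((Int.gcd (p % q) q : ℤ)) ∣ p := by
    have h2 : ((Int.gcd (p % q) q : ℤ)) ∣ p % q := Int.gcd_dvd_left _ _
    have he : p % q + (q : ℤ) * (p / q) = p := Int.emod_add_mul_ediv p q
    simpa [he] using dvd_add h2 (h3.mul_right (p / q))
  have hfin := Int.dvd_gcd hd h3
  rw [h] at hfin
  exact Nat.dvd_one.mp (by exact_mod_cast hfin)

open Fin.CommRing in
/-- determinant of a diagonal matrix plus a multiple of the cyclic shift -/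
lemma aux_det (n : ℕ) (d : Fin (n + 2) → ℂ) (b : ℂ) :
    Matrix.det (Matrix.of fun i j : Fin (n + 2) =>
      (if j = i then d i else 0) + (if j = i + 1 then b else 0))
    = ∏ i, d i + (-1) ^ (n + 1) * b ^ (n + 2) := by
  classical
  set M : Matrix (Fin (n+2)) (Fin (n+2)) ℂ := Matrix.of fun i j =>
      (if j = i then d i else 0) + (if j = i + 1 then b else 0) with hMdef
  have hone : (1 : Fin (n+2)) ≠ 0 := by
    simp [Fin.ext_iff]
  set c : Equiv.Perm (Fin (n+2)) := Equiv.subRight 1 with hcdef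
  have hc_apply : ∀ i, c i = i - 1 := fun i => rfl
  have hid_ne : (1 : Equiv.Perm (Fin (n+2))) ≠ c := by
    intro h
    have := congrArg (fun σ : Equiv.Perm (Fin (n+2)) => σ 0) h
    simp [hc_apply] at this
  have hzero : ∀ σ : Equiv.Perm (Fin (n+2)), σ ∉ ({1, c} : Finset (Equiv.Perm (Fin (n+2)))) →
      (Equiv.Perm.sign σ : ℂ) * ∏ i, M (σ i) i = 0 := by
    intro σ hσ
    simp only [Finset.mem_insert, Finset.mem_singleton] at hσ
    push_neg at hσ
    obtain ⟨h1, hc⟩ := hσ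
    rw [mul_eq_zero]; right
    by_contra hne
    have hnz : ∀ i, M (σ i) i ≠ 0 := fun i hi =>
      hne (Finset.prod_eq_zero (Finset.mem_univ i) hi)
    have hcases : ∀ i, σ i = i ∨ σ i = i - 1 := by
      intro i
      rcases eq_or_ne (σ i) i with h | h
      · exact Or.inl h
      rcases eq_or_ne (σ i) (i - 1) with h2 | h2
      · exact Or.inr h2
      exfalso; apply hnz i
      have e1 : i ≠ σ i := Ne.symm h
      have e2 : i ≠ σ i + 1 := by
        intro he
        exact h2 (eq_sub_of_add_eq he.symm)
      simp [hMdef, Matrix.of_apply, if_neg (Ne.symm h), if_neg e2]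
    by_cases hid : ∀ i, σ i = i
    · exact h1 (Equiv.ext hid)
    push_neg at hid
    obtain ⟨i₀, hi₀⟩ := hid
    have hstart : σ i₀ = i₀ - 1 := (hcases i₀).resolve_left hi₀
    have hall : ∀ k : ℕ, σ (i₀ - (k : Fin (n+2))) = i₀ - (k : Fin (n+2)) - 1 := by
      intro k
      induction k with
      | zero => simpa using hstart
      | succ k ih =>
        have hk1 : ((k + 1 : ℕ) : Fin (n+2)) = (k : Fin (n+2)) + 1 := by push_cast; ring
        rw [hk1, ← sub_sub]
        rcases hcases (i₀ - (k : Fin (n+2)) - 1) with h | h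
        · exfalso
          have hinj := σ.injective (ih.trans h.symm)
          have : (1 : Fin (n+2)) = 0 := by
            have := sub_eq_self.mp hinj.symm
            exact this
          exact hone this
        · exact h
    apply hc
    apply Equiv.ext
    intro i
    have hk := hall ((i₀ - i) : Fin (n+2)).val
    rw [Fin.cast_val_eq_self, sub_sub_cancel] at hk
    rw [hk, hc_apply]
  rw [Matrix.det_apply']
  rw [← Finset.sum_subset (Finset.subset_univ ({1, c} : Finset (Equiv.Perm (Fin (n+2)))))
    (fun σ _ hσ => hzero σ hσ)]
  rw [Finset.sum_pair hid_ne]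
  have hterm1 : (Equiv.Perm.sign (1 : Equiv.Perm (Fin (n+2))) : ℂ) *
      ∏ i, M ((1 : Equiv.Perm (Fin (n+2))) i) i = ∏ i, d i := by
    simp only [Equiv.Perm.sign_one, Units.val_one, Int.cast_one, one_mul, Equiv.Perm.one_apply]
    apply Finset.prod_congr rfl
    intro i _
    have : i ≠ i + 1 := by
      intro he
      exact hone (by simpa using (left_eq_add.mp he))
    simp [hMdef, this]
  have hsignc : ((Equiv.Perm.sign c : ℤ) : ℂ) = (-1) ^ (n + 1) := by
    have hcinv : c⁻¹ = finRotate (n + 2) := by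
      apply Equiv.ext
      intro i
      rw [finRotate_succ_apply]
      simp [hcdef, Equiv.Perm.inv_def]
    have : Equiv.Perm.sign c = Equiv.Perm.sign c⁻¹ := (Equiv.Perm.sign_inv c).symm
    rw [this, hcinv, sign_finRotate]
    push_cast; ring
  have hterm2 : ((Equiv.Perm.sign c : ℤ) : ℂ) * ∏ i, M (c i) i
      = (-1) ^ (n + 1) * b ^ (n + 2) := by
    rw [hsignc]
    congr 1
    have hprod : ∀ i : Fin (n+2), M (c i) i = b := by
      intro i
      rw [hc_apply]
      have e1 : i ≠ i - 1 := by
        intro he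
        exact hone (by simpa using (sub_eq_self.mp he.symm))
      have e2 : i = i - 1 + 1 := by ring
      simp [hMdef, if_neg e1, if_pos e2.symm, ← e2]
    rw [Finset.prod_congr rfl (fun i _ => hprod i)]
    simp
  rw [hterm1, hterm2]

theorem stmt_6 (p : ℤ) (q : ℕ) (hq : 0 < q) (hpq : Int.gcd p (q : ℤ) = 1)
    (θ₁ θ₂ : ℝ) (l : ℂ) :
    Matrix.det (-(l • (1 : Matrix (Fin q) (Fin q) ℂ))
        + Complex.exp (Complex.I * (θ₁ : ℂ)) • Jmat p q
        + Complex.exp (Complex.I * (θ₂ : ℂ)) • Kmat q) =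
      (-1 : ℂ) ^ q * (l ^ q - Complex.exp (Complex.I * (q : ℂ) * (θ₁ : ℂ))
        - Complex.exp (Complex.I * (q : ℂ) * (θ₂ : ℂ))) := by
  rcases Nat.lt_or_ge q 2 with h2 | h2
  · -- q = 1
    have hq1 : q = 1 := by omega
    subst hq1
    rw [Matrix.det_fin_one]
    have h1 : Complex.I * ((1 : ℕ) : ℂ) * (θ₁ : ℂ) = Complex.I * (θ₁ : ℂ) := by push_cast; ring
    have h2 : Complex.I * ((1 : ℕ) : ℂ) * (θ₂ : ℂ) = Complex.I * (θ₂ : ℂ) := by push_cast; ring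
    simp only [Matrix.add_apply, Matrix.neg_apply, Matrix.smul_apply, Matrix.one_apply_eq,
      smul_eq_mul, mul_one, Jmat, Kmat, Matrix.diagonal_apply_eq, Matrix.of_apply]
    norm_num [h1, h2]
    ring
  · -- q = n + 2
    obtain ⟨n, rfl⟩ : ∃ n, q = n + 2 := ⟨q - 2, by omega⟩
    set a : ℂ := Complex.exp (Complex.I * (θ₁ : ℂ)) with hadef
    set b : ℂ := Complex.exp (Complex.I * (θ₂ : ℂ)) with hbdef
    set γc : ℂ := ((2 * Real.pi * (p : ℝ) / ((n + 2 : ℕ) : ℝ) : ℝ) : ℂ) with hγdef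
    set ω : ℂ := Complex.exp (Complex.I * γc) with hωdef
    have h10 : (1 : Fin (n + 2)) ≠ 0 := by simp [Fin.ext_iff]
    -- the matrix in normal form
    have hMat : (-(l • (1 : Matrix (Fin (n+2)) (Fin (n+2)) ℂ)) + a • Jmat p (n+2) + b • Kmat (n+2))
        = Matrix.of fun i j : Fin (n+2) =>
            (if j = i then (a * ω ^ (i : ℕ) - l) else 0) + (if j = i + 1 then b else 0) := by
      ext i j
      have hKcond : (((i : ℕ) + 1) % (n + 2) = (j : ℕ)) ↔ j = i + 1 := by
        have hval : ((i + 1 : Fin (n+2)) : ℕ) = ((i : ℕ) + 1) % (n + 2) := by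
          rw [Fin.val_add, Fin.val_one]
        rw [Fin.ext_iff, hval, eq_comm]
      have hdiag : Complex.exp (Complex.I * ((i : ℕ) : ℂ) * γc) = ω ^ (i : ℕ) := by
        have hcomm : Complex.I * ((i : ℕ) : ℂ) * γc = ((i : ℕ) : ℂ) * (Complex.I * γc) := by
          ring
        rw [hcomm, Complex.exp_nat_mul]
      simp only [Matrix.add_apply, Matrix.neg_apply, Matrix.smul_apply, Matrix.one_apply,
        smul_eq_mul, Jmat, Kmat, Matrix.diagonal_apply, Matrix.of_apply, hdiag, hKcond]
      by_cases hij : i = j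
      · subst hij
        have hne : i ≠ i + 1 := fun he => h10 (left_eq_add.mp he)
        rw [if_pos rfl, if_pos rfl, if_pos rfl, if_neg hne, if_neg hne]
        rw [← hdiag, hγdef]; push_cast
        ring
      · have hji : ¬ j = i := fun h => hij h.symm
        rw [if_neg hij, if_neg hij, if_neg hji]
        split_ifs <;> ring
    rw [hMat, aux_det n (fun i => a * ω ^ (i : ℕ) - l) b]
    -- primitive root
    have hqZ : (((n + 2 : ℕ)) : ℤ) ≠ 0 := by positivity
    set m : ℕ := (p % ((n + 2 : ℕ) : ℤ)).toNat with hmdef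
    have hm : ((m : ℤ)) = p % ((n + 2 : ℕ) : ℤ) := Int.toNat_of_nonneg (Int.emod_nonneg p hqZ)
    have hcop : Nat.Coprime m (n + 2) := by
      have hg := aux_gcd_emod p (n + 2) hpq
      rw [Nat.Coprime, ← Int.gcd_natCast_natCast, hm]
      exact hg
    have hprim0 : IsPrimitiveRoot
        (Complex.exp (2 * Real.pi * Complex.I * ((m : ℂ) / ((n + 2 : ℕ) : ℂ)))) (n + 2) :=
      Complex.isPrimitiveRoot_exp_of_coprime m (n + 2) (Nat.succ_ne_zero _) hcop
    have hωeq : ω = Complex.exp (2 * Real.pi * Complex.I * ((m : ℂ) / ((n + 2 : ℕ) : ℂ))) := by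
      have hqC : (((n + 2 : ℕ)) : ℂ) ≠ 0 := Nat.cast_ne_zero.mpr (Nat.succ_ne_zero _)
      have hpc : ((p : ℂ)) = ((n + 2 : ℕ) : ℂ) * ((p / ((n + 2 : ℕ) : ℤ) : ℤ) : ℂ) + (m : ℂ) := by
        have hdm := Int.mul_ediv_add_emod p ((n + 2 : ℕ) : ℤ)
        rw [← hm] at hdm
        exact_mod_cast congrArg (fun z : ℤ => (z : ℂ)) hdm.symm
      have hγc : γc = 2 * (Real.pi : ℂ) * (p : ℂ) / ((n + 2 : ℕ) : ℂ) := by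
        rw [hγdef]; push_cast; ring
      have hdiv : (p : ℂ) / ((n + 2 : ℕ) : ℂ)
          = ((p / ((n + 2 : ℕ) : ℤ) : ℤ) : ℂ) + (m : ℂ) / ((n + 2 : ℕ) : ℂ) := by
        rw [hpc, add_div, mul_div_cancel_left₀ _ hqC]
      have hsplit : Complex.I * γc
          = 2 * Real.pi * Complex.I * ((m : ℂ) / ((n + 2 : ℕ) : ℂ))
            + ((p / ((n + 2 : ℕ) : ℤ) : ℤ) : ℂ) * (2 * Real.pi * Complex.I) := by
        rw [hγc,
          show 2 * (Real.pi : ℂ) * (p : ℂ) / ((n + 2 : ℕ) : ℂ)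
            = 2 * (Real.pi : ℂ) * ((p : ℂ) / ((n + 2 : ℕ) : ℂ)) from by ring,
          hdiv]
        ring
      rw [hωdef, hsplit, Complex.exp_add, Complex.exp_int_mul_two_pi_mul_I, mul_one]
    have hω : IsPrimitiveRoot ω (n + 2) := hωeq ▸ hprim0
    -- the diagonal product
    have hprodval : ∏ i : Fin (n+2), (a * ω ^ (i : ℕ) - l)
        = (-1 : ℂ) ^ (n + 2) * (l ^ (n + 2) - a ^ (n + 2)) := by
      rw [Fin.prod_univ_eq_prod_range (fun i => a * ω ^ i - l) (n + 2)]
      have hcg : ∀ i ∈ Finset.range (n + 2), a * ω ^ i - l = (-1) * (l - ω ^ i * a) := by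
        intro i _; ring
      rw [Finset.prod_congr rfl hcg, Finset.prod_mul_distrib, Finset.prod_const,
        Finset.card_range, aux_prod_roots (n + 2) (by omega) hω a l]
    rw [hprodval]
    -- powers of a and b
    have ha : a ^ (n + 2) = Complex.exp (Complex.I * (((n + 2 : ℕ)) : ℂ) * (θ₁ : ℂ)) := by
      have hcomm : Complex.I * (((n + 2 : ℕ)) : ℂ) * (θ₁ : ℂ)
          = (((n + 2 : ℕ)) : ℂ) * (Complex.I * (θ₁ : ℂ)) := by ring
      rw [hadef, ← Complex.exp_nat_mul, hcomm]
    have hb : b ^ (n + 2) = Complex.exp (Complex.I * (((n + 2 : ℕ)) : ℂ) * (θ₂ : ℂ)) := by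
      have hcomm : Complex.I * (((n + 2 : ℕ)) : ℂ) * (θ₂ : ℂ)
          = (((n + 2 : ℕ)) : ℂ) * (Complex.I * (θ₂ : ℂ)) := by ring
      rw [hbdef, ← Complex.exp_nat_mul, hcomm]
    rw [← ha, ← hb]
    ring
end
end

section
/- Let p ∈ ℤ and q ∈ ℕ* be relatively prime, γ = 2πp/q. There exists (θ₁,θ₂) ∈ ℝ² such that det(I_q + e^{iθ₁} J_{p,q} + e^{iθ₂} K_q) = 0; for example θ₁ = π + π/(3q) and θ₂ = π - π/(3q) work. -/
noncomputable section

open Matrix Complex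

/-- For a primitive `q`-th root of unity `ω`, `∏_{k<q} (z - ω^k) = z^q - 1`. -/
lemma prod_sub_pow_aux {q : ℕ} (hq : 0 < q) {ω : ℂ} (hω : IsPrimitiveRoot ω q) (z : ℂ) :
    ∏ k ∈ Finset.range q, (z - ω ^ k) = z ^ q - 1 := by
  have : NeZero q := ⟨hq.ne'⟩
  have h2 : Polynomial.nthRootsFinset q (1 : ℂ) = (Finset.range q).image (ω ^ ·) := by
    ext x
    simp only [Polynomial.mem_nthRootsFinset hq (1 : ℂ), Finset.mem_image, Finset.mem_range]
    constructor
    · intro hx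
      obtain ⟨i, hi, hix⟩ := hω.eq_pow_of_pow_eq_one hx
      exact ⟨i, hi, hix⟩
    · rintro ⟨i, hi, rfl⟩
      rw [← pow_mul, mul_comm, pow_mul, hω.pow_eq_one, one_pow]
  have h1 := Polynomial.X_pow_sub_one_eq_prod hq hω
  have h3 := congrArg (Polynomial.eval z) h1
  simp only [Polynomial.eval_sub, Polynomial.eval_pow, Polynomial.eval_X, Polynomial.eval_one,
    Polynomial.eval_prod, Polynomial.eval_C] at h3
  rw [h3, h2, Finset.prod_image]
  intro i hi j hj hij
  exact hω.pow_inj (Finset.mem_range.mp hi) (Finset.mem_range.mp hj) hij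

/-- Determinant of a cyclic bidiagonal matrix vanishes given the product condition. -/
lemma det_cyclic_bidiagonal_eq_zero {q : ℕ} (hq : 0 < q) (G : ℕ → ℂ) (b : ℂ) (hb : b ≠ 0)
    (hcond : b ^ q = (-1 : ℂ) ^ q * ∏ k ∈ Finset.range q, G k) :
    Matrix.det (Matrix.diagonal (fun j : Fin q => G (j : ℕ)) + b • Kmat q) = 0 := by
  rw [← Matrix.exists_mulVec_eq_zero_iff]
  refine ⟨fun j : Fin q => b ^ (q - 1 - (j : ℕ)) * ∏ k ∈ Finset.range (j : ℕ), (-(G k)), ?_, ?_⟩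
  · intro h
    have h0 := congrFun h ⟨0, hq⟩
    simp only [Finset.range_zero, Finset.prod_empty, mul_one, Pi.zero_apply] at h0
    exact pow_ne_zero _ hb h0
  · funext j
    have hKv : (Kmat q *ᵥ fun j : Fin q =>
        b ^ (q - 1 - (j : ℕ)) * ∏ k ∈ Finset.range (j : ℕ), (-(G k))) j
        = b ^ (q - 1 - (((j : ℕ) + 1) % q)) *
          ∏ k ∈ Finset.range (((j : ℕ) + 1) % q), (-(G k)) := by
      classical
      set c : Fin q := (⟨((j : ℕ) + 1) % q, Nat.mod_lt _ hq⟩ : Fin q) with hc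
      have hiff : ∀ k : Fin q, ((((j : ℕ) + 1) % q = (k : ℕ)) ↔ k = c) := by
        intro k
        rw [hc, Fin.ext_iff, eq_comm]
      simp only [Kmat, Matrix.mulVec, Matrix.of_apply, dotProduct]
      have hterm : ∀ k : Fin q, k ∈ Finset.univ →
          (if ((j : ℕ) + 1) % q = (k : ℕ) then (1 : ℂ) else 0) *
            (b ^ (q - 1 - (k : ℕ)) * ∏ l ∈ Finset.range (k : ℕ), (-(G l)))
          = if k = c then b ^ (q - 1 - (k : ℕ)) * ∏ l ∈ Finset.range (k : ℕ), (-(G l)) else 0 := by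
        intro k _
        simp only [ite_mul, one_mul, zero_mul]
        exact if_congr (hiff k) rfl rfl
      rw [Finset.sum_congr rfl hterm, Finset.sum_ite_eq' Finset.univ c]
      simp [hc]
    rw [Matrix.add_mulVec, Matrix.smul_mulVec, Pi.add_apply, Matrix.mulVec_diagonal,
      Pi.smul_apply, hKv, Pi.zero_apply]
    by_cases hj : (j : ℕ) + 1 < q
    · have hmod : ((j : ℕ) + 1) % q = (j : ℕ) + 1 := Nat.mod_eq_of_lt hj
      rw [hmod, Finset.prod_range_succ]
      have hpow : b * b ^ (q - 1 - ((j : ℕ) + 1)) = b ^ (q - 1 - (j : ℕ)) := by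
        rw [← pow_succ']
        congr 1
        omega
      rw [smul_eq_mul]
      calc G (j : ℕ) * (b ^ (q - 1 - (j : ℕ)) * ∏ k ∈ Finset.range (j : ℕ), (-(G k)))
            + b * (b ^ (q - 1 - ((j : ℕ) + 1)) *
              ((∏ k ∈ Finset.range (j : ℕ), (-(G k))) * (-(G (j : ℕ)))))
          = G (j : ℕ) * (b ^ (q - 1 - (j : ℕ)) * ∏ k ∈ Finset.range (j : ℕ), (-(G k)))
            + (b * b ^ (q - 1 - ((j : ℕ) + 1))) *
              ((∏ k ∈ Finset.range (j : ℕ), (-(G k))) * (-(G (j : ℕ)))) := by ring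
        _ = 0 := by rw [hpow]; ring
    · have hjq : (j : ℕ) = q - 1 := by have := j.isLt; omega
      have hmod : ((j : ℕ) + 1) % q = 0 := by
        have : (j : ℕ) + 1 = q := by omega
        rw [this, Nat.mod_self]
      rw [hmod, hjq]
      simp only [Finset.range_zero, Finset.prod_empty, mul_one, Nat.sub_zero, Nat.sub_self,
        pow_zero, one_mul, smul_eq_mul]
      have hprodq : ∏ k ∈ Finset.range q, (-(G k)) = (-1 : ℂ) ^ q * ∏ k ∈ Finset.range q, G k := by
        have h' : ∀ k ∈ Finset.range q, -(G k) = (-1 : ℂ) * G k := fun k _ => by ring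
        rw [Finset.prod_congr rfl h', Finset.prod_mul_distrib, Finset.prod_const,
          Finset.card_range]
      have hq' : q = (q - 1) + 1 := by omega
      have hsplit : ∏ k ∈ Finset.range q, (-(G k))
          = (∏ k ∈ Finset.range (q - 1), (-(G k))) * (-(G (q - 1))) := by
        conv_lhs => rw [hq', Finset.prod_range_succ]
      have hbq : b * b ^ (q - 1) = b ^ q := by
        rw [← pow_succ']; congr 1; omega
      have key : G (q - 1) * ∏ k ∈ Finset.range (q - 1), (-(G k))
          = -((-1 : ℂ) ^ q * ∏ k ∈ Finset.range q, G k) := by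
        rw [← hprodq, hsplit]; ring
      rw [key, hbq, hcond]; ring

theorem stmt_7 (p : ℤ) (q : ℕ) (hq : 0 < q) (hpq : Int.gcd p (q : ℤ) = 1) :
    (∃ θ₁ θ₂ : ℝ,
      Matrix.det ((1 : Matrix (Fin q) (Fin q) ℂ)
          + Complex.exp (Complex.I * (θ₁ : ℂ)) • Jmat p q
          + Complex.exp (Complex.I * (θ₂ : ℂ)) • Kmat q) = 0) ∧
    Matrix.det ((1 : Matrix (Fin q) (Fin q) ℂ)
        + Complex.exp (Complex.I * ((Real.pi + Real.pi / (3 * q) : ℝ) : ℂ)) • Jmat p q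
        + Complex.exp (Complex.I * ((Real.pi - Real.pi / (3 * q) : ℝ) : ℂ)) • Kmat q) = 0 := by
  have hq0 : (q : ℂ) ≠ 0 := Nat.cast_ne_zero.mpr hq.ne'
  have hq0' : (q : ℝ) ≠ 0 := Nat.cast_ne_zero.mpr hq.ne'
  set θ₁ : ℝ := Real.pi + Real.pi / (3 * q) with hθ₁
  set θ₂ : ℝ := Real.pi - Real.pi / (3 * q) with hθ₂
  set a : ℂ := Complex.exp (Complex.I * (θ₁ : ℂ)) with ha
  set b : ℂ := Complex.exp (Complex.I * (θ₂ : ℂ)) with hb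
  have ha0 : a ≠ 0 := Complex.exp_ne_zero _
  have hb0 : b ≠ 0 := Complex.exp_ne_zero _
  set ω : ℂ := Complex.exp (Complex.I * ((2 * Real.pi * (p : ℝ) / (q : ℝ) : ℝ) : ℂ)) with hω
  -- ω is a primitive q-th root of unity
  have hωprim : IsPrimitiveRoot ω q := by
    have hζ := Complex.isPrimitiveRoot_exp q hq.ne'
    have hωζ : ω = Complex.exp (2 * ↑Real.pi * Complex.I / (q : ℂ)) ^ (p : ℤ) := by
      rw [← Complex.exp_int_mul, hω]
      congr 1
      push_cast
      field_simp
    rw [hωζ]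
    exact hζ.zpow_of_gcd_eq_one p hpq
  -- the matrix is diagonal + b • K
  have hfun : (fun j : Fin q => Complex.exp (Complex.I * ((j : ℕ) : ℂ) *
      ((2 * Real.pi * (p : ℝ) / (q : ℝ) : ℝ) : ℂ))) = fun j : Fin q => ω ^ (j : ℕ) := by
    funext j
    rw [hω, ← Complex.exp_nat_mul]
    congr 1
    ring
  have hM : (1 : Matrix (Fin q) (Fin q) ℂ) + a • Jmat p q + b • Kmat q
      = Matrix.diagonal (fun j : Fin q => (fun k : ℕ => 1 + a * ω ^ k) (j : ℕ)) + b • Kmat q := by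
    congr 1
    unfold Jmat
    rw [hfun, show (1 : Matrix (Fin q) (Fin q) ℂ)
        = Matrix.diagonal (fun _ : Fin q => (1 : ℂ)) from (Matrix.diagonal_one).symm,
      show a • Matrix.diagonal (fun j : Fin q => ω ^ (j : ℕ))
        = Matrix.diagonal (fun j : Fin q => a * ω ^ (j : ℕ)) from
        (Matrix.diagonal_smul a _).symm, Matrix.diagonal_add]
  -- the determinant condition
  have he : ((-1 : ℂ) ^ q) * ((-1 : ℂ) ^ q) = 1 := by
    rw [← mul_pow]; norm_num
  have hexp3 : Complex.exp (((Real.pi / 3 : ℝ) : ℂ) * I)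
      = (1 / 2 : ℂ) + ((Real.sqrt 3 / 2 : ℝ) : ℂ) * I := by
    rw [Complex.exp_mul_I, ← Complex.ofReal_cos, ← Complex.ofReal_sin,
      Real.cos_pi_div_three, Real.sin_pi_div_three]
    push_cast
    ring
  have hexp3' : Complex.exp (-((Real.pi / 3 : ℝ) : ℂ) * I)
      = (1 / 2 : ℂ) - ((Real.sqrt 3 / 2 : ℝ) : ℂ) * I := by
    rw [Complex.exp_mul_I, Complex.cos_neg, Complex.sin_neg, ← Complex.ofReal_cos,
      ← Complex.ofReal_sin, Real.cos_pi_div_three, Real.sin_pi_div_three]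
    push_cast
    ring
  have haq : a ^ q = (-1 : ℂ) ^ q * ((1 / 2 : ℂ) + ((Real.sqrt 3 / 2 : ℝ) : ℂ) * I) := by
    calc a ^ q = Complex.exp ((q : ℂ) * (Complex.I * (θ₁ : ℂ))) := (Complex.exp_nat_mul _ q).symm
      _ = Complex.exp ((Real.pi : ℂ) * I) ^ q * Complex.exp (((Real.pi / 3 : ℝ) : ℂ) * I) := by
          rw [← Complex.exp_nat_mul, ← Complex.exp_add]
          congr 1
          rw [hθ₁]
          push_cast
          field_simp
      _ = (-1 : ℂ) ^ q * ((1 / 2 : ℂ) + ((Real.sqrt 3 / 2 : ℝ) : ℂ) * I) := by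
          rw [Complex.exp_pi_mul_I, hexp3]
  have hbq : b ^ q = (-1 : ℂ) ^ q * ((1 / 2 : ℂ) - ((Real.sqrt 3 / 2 : ℝ) : ℂ) * I) := by
    calc b ^ q = Complex.exp ((q : ℂ) * (Complex.I * (θ₂ : ℂ))) := (Complex.exp_nat_mul _ q).symm
      _ = Complex.exp ((Real.pi : ℂ) * I) ^ q * Complex.exp (-((Real.pi / 3 : ℝ) : ℂ) * I) := by
          rw [← Complex.exp_nat_mul, ← Complex.exp_add]
          congr 1
          rw [hθ₂]
          push_cast
          field_simp
          ring
      _ = (-1 : ℂ) ^ q * ((1 / 2 : ℂ) - ((Real.sqrt 3 / 2 : ℝ) : ℂ) * I) := by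
          rw [Complex.exp_pi_mul_I, hexp3']
  have hgoal : b ^ q = (-1 : ℂ) ^ q - a ^ q := by
    rw [haq, hbq]; ring
  have hfac : ∀ k ∈ Finset.range q, (1 : ℂ) + a * ω ^ k = (-a) * (-a⁻¹ - ω ^ k) := by
    intro k _
    field_simp
    ring
  have hone : (-a) ^ q * (-a⁻¹) ^ q = 1 := by
    rw [← mul_pow]
    field_simp
    simp
  have hprod2 : ∏ k ∈ Finset.range q, ((1 : ℂ) + a * ω ^ k) = 1 - (-a) ^ q := by
    rw [Finset.prod_congr rfl hfac, Finset.prod_mul_distrib, Finset.prod_const,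
      Finset.card_range, prod_sub_pow_aux hq hωprim, mul_sub, hone, mul_one]
  have hcond : b ^ q = (-1 : ℂ) ^ q * ∏ k ∈ Finset.range q, ((1 : ℂ) + a * ω ^ k) := by
    rw [hprod2, hgoal, neg_pow]
    linear_combination a ^ q * he
  have hdet : Matrix.det ((1 : Matrix (Fin q) (Fin q) ℂ) + a • Jmat p q + b • Kmat q) = 0 := by
    rw [hM]
    exact det_cyclic_bidiagonal_eq_zero hq (fun k => 1 + a * ω ^ k) b hb0 hcond
  exact ⟨⟨θ₁, θ₂, hdet⟩, hdet⟩
end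
end

section
/- Let p ∈ ℤ and q ∈ ℕ* be relatively prime, γ = 2πp/q, and let M_G(θ₁,θ₂) be the 2q×2q graphene matrix. Then there exists (θ₁,θ₂) ∈ ℝ² such that det(M_G(θ₁,θ₂)) = 0, i.e. 0 belongs to the spectrum of the graphene model. -/
noncomputable section

open Matrix Complex

lemma prod_one_add (q : ℕ) (hq : q ≠ 0) (ζ x : ℂ) (hζ : IsPrimitiveRoot ζ q) (hx : x ≠ 0) :
    ∏ k ∈ Finset.range q, (1 + x * ζ ^ k) = 1 - (-x) ^ q := by
  have e : (1 : ℂ) ^ q = 1 := one_pow q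
  have h := X_pow_sub_C_eq_prod hζ (Nat.pos_of_ne_zero hq) e
  have h2 := congrArg (Polynomial.eval (-1/x)) h
  simp [Polynomial.eval_prod] at h2
  have h3 : ∏ k ∈ Finset.range q, (1 + x * ζ ^ k)
      = ∏ k ∈ Finset.range q, ((-x) * (-1/x - ζ ^ k)) := by
    refine Finset.prod_congr rfl fun k _ => ?_
    field_simp; ring
  have h4 : (-x)^q * (-1/x)^q = 1 := by
    rw [← mul_pow]; field_simp; simp
  rw [h3, Finset.prod_mul_distrib, Finset.prod_const, Finset.card_range, ← h2,
    mul_sub, h4, mul_one]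

lemma zeta_prim (p : ℤ) (q : ℕ) (hq : 0 < q) (hpq : Int.gcd p (q : ℤ) = 1) :
    IsPrimitiveRoot (Complex.exp (Complex.I * ((2 * Real.pi * (p:ℝ) / (q:ℝ) : ℝ) : ℂ))) q := by
  have hq0 : (q : ℤ) ≠ 0 := by exact_mod_cast hq.ne'
  set i : ℕ := (p % q).toNat with hi
  have hiz : (i : ℤ) = p % q := Int.toNat_of_nonneg (Int.emod_nonneg p hq0)
  have hcop : i.Coprime q := by
    have h1 : IsCoprime p (q : ℤ) := Int.isCoprime_iff_gcd_eq_one.mpr hpq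
    have h2 : IsCoprime (p % (q:ℤ)) (q : ℤ) := by
      have h : p % (q:ℤ) = p + (-(p / q)) * q := by
        rw [neg_mul, ← sub_eq_add_neg, eq_sub_iff_add_eq]
        exact Int.emod_add_ediv_mul p q
      rw [h]
      exact h1.add_mul_right_left _
    have h3 : Int.gcd (p % (q:ℤ)) (q:ℤ) = 1 := Int.isCoprime_iff_gcd_eq_one.mp h2
    rwa [← hiz, Int.gcd_natCast_natCast] at h3
  have hprim := Complex.isPrimitiveRoot_exp_of_coprime i q hq.ne' hcop
  have hdz : p = (q:ℤ) * (p / (q:ℤ)) + (i:ℤ) := by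
    rw [hiz]; exact (Int.mul_ediv_add_emod p q).symm
  have hd : (p : ℂ) = (q:ℂ) * ((p / (q:ℤ) : ℤ):ℂ) + (i : ℂ) := by
    exact_mod_cast congrArg (fun z : ℤ => (z : ℂ)) hdz
  have hqc : (q : ℂ) ≠ 0 := by exact_mod_cast hq.ne'
  have key : Complex.exp (Complex.I * ((2 * Real.pi * (p:ℝ) / (q:ℝ) : ℝ) : ℂ))
      = Complex.exp (2 * (Real.pi:ℂ) * Complex.I * ((i:ℂ) / (q:ℂ))) := by
    have harg : Complex.I * ((2 * Real.pi * (p:ℝ) / (q:ℝ) : ℝ) : ℂ)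
        = 2 * (Real.pi:ℂ) * Complex.I * ((i:ℂ) / (q:ℂ))
          + ((p / (q:ℤ) : ℤ):ℂ) * (2 * (Real.pi:ℂ) * Complex.I) := by
      push_cast
      rw [hd]
      field_simp
      ring
    rw [harg, Complex.exp_add, Complex.exp_int_mul_two_pi_mul_I, mul_one]
  rw [key]
  exact hprim

theorem stmt_8 (p : ℤ) (q : ℕ) (hq : 0 < q) (hpq : Int.gcd p (q : ℤ) = 1) :
    ∃ θ₁ θ₂ : ℝ, Matrix.det (MG p q θ₁ θ₂) = 0 := by
  classical
  set θ₁ : ℝ := Real.pi + Real.pi / (3 * q) with hθ₁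
  set θ₂ : ℝ := Real.pi - Real.pi / (3 * q) with hθ₂
  refine ⟨θ₁, θ₂, ?_⟩
  have hqc : (q : ℂ) ≠ 0 := by exact_mod_cast hq.ne'
  set x : ℂ := Complex.exp (Complex.I * (θ₁ : ℂ)) with hx
  set y : ℂ := Complex.exp (Complex.I * (θ₂ : ℂ)) with hy
  have hx0 : x ≠ 0 := Complex.exp_ne_zero _
  have hy0 : y ≠ 0 := Complex.exp_ne_zero _
  set ζ : ℂ := Complex.exp (Complex.I * ((2 * Real.pi * (p:ℝ) / (q:ℝ) : ℝ) : ℂ)) with hζdef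
  have hζ : IsPrimitiveRoot ζ q := zeta_prim p q hq hpq
  set c : ℕ → ℂ := fun k => 1 + x * ζ ^ k with hc
  -- the values of -x and -y
  have hmx : -x = Complex.exp (Complex.I * ((Real.pi / (3*q) : ℝ) : ℂ)) := by
    rw [hx, hθ₁]
    push_cast
    rw [mul_add, Complex.exp_add, mul_comm Complex.I (Real.pi:ℂ), Complex.exp_pi_mul_I]
    ring
  have hmy : -y = Complex.exp (-(Complex.I * ((Real.pi / (3*q) : ℝ) : ℂ))) := by
    rw [hy, hθ₂]
    push_cast
    rw [sub_eq_add_neg, mul_add, Complex.exp_add, mul_comm Complex.I (Real.pi:ℂ),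
      Complex.exp_pi_mul_I, mul_neg]
    ring
  have hq3 : (q:ℂ) * (Complex.I * ((Real.pi / (3*q) : ℝ) : ℂ)) = Complex.I * ((Real.pi:ℂ)/3) := by
    push_cast
    field_simp
  have hmxq : (-x) ^ q = Complex.exp (Complex.I * ((Real.pi:ℂ)/3)) := by
    rw [hmx, ← Complex.exp_nat_mul, hq3]
  have hmyq : (-y) ^ q = Complex.exp (-(Complex.I * ((Real.pi:ℂ)/3))) := by
    rw [hmy, ← Complex.exp_nat_mul, mul_neg, hq3]
  -- the key algebraic identity : 1 - e^{iπ/3} = e^{-iπ/3}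
  have htrig : (1:ℂ) - Complex.exp (Complex.I * ((Real.pi:ℂ)/3))
      = Complex.exp (-(Complex.I * ((Real.pi:ℂ)/3))) := by
    have h1 : Complex.I * ((Real.pi:ℂ)/3) = ((Real.pi/3 : ℝ):ℂ) * Complex.I := by
      push_cast; ring
    rw [h1, ← neg_mul, Complex.exp_mul_I, Complex.exp_mul_I]
    rw [show (-((Real.pi/3:ℝ):ℂ)) = (((-(Real.pi/3):ℝ)):ℂ) by push_cast; ring]
    rw [← Complex.ofReal_cos, ← Complex.ofReal_cos, ← Complex.ofReal_sin, ← Complex.ofReal_sin]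
    rw [Real.cos_neg, Real.sin_neg, Real.cos_pi_div_three, Real.sin_pi_div_three]
    push_cast
    ring
  -- the product of the c's
  have hkey : ∏ k ∈ Finset.range q, c k = (-y) ^ q := by
    rw [hc]
    rw [prod_one_add q hq.ne' ζ x hζ hx0, hmxq, hmyq, htrig]
  -- the null vector
  set v : Fin q → ℂ := fun j => (-(1/y))^(j:ℕ) * ∏ k ∈ Finset.range (j:ℕ), c k with hv
  have hAv : Agr p q θ₁ θ₂ *ᵥ v = 0 := by
    funext j
    have hJv : (Jmat p q *ᵥ v) j = ζ ^ (j:ℕ) * v j := by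
      rw [Jmat, Matrix.mulVec_diagonal]
      congr 2
      rw [hζdef, ← Complex.exp_nat_mul]
      congr 1
      ring
    have hj' : ((j:ℕ) + 1) % q < q := Nat.mod_lt _ hq
    set j' : Fin q := ⟨((j:ℕ) + 1) % q, hj'⟩ with hj'def
    have hKv : (Kmat q *ᵥ v) j = v j' := by
      rw [Matrix.mulVec]
      have : ∀ k : Fin q, Kmat q j k * v k = if j' = k then v k else 0 := by
        intro k
        rw [Kmat]
        simp only [Matrix.of_apply]
        by_cases h : ((j:ℕ) + 1) % q = (k:ℕ)
        · rw [if_pos h, if_pos (by apply Fin.ext; exact h), one_mul]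
        · rw [if_neg h, if_neg (by intro hh; exact h (by rw [← hh])), zero_mul]
      simp only [dotProduct]
      rw [Finset.sum_congr rfl (fun k _ => this k), Finset.sum_ite_eq]
      simp
    have hentry : (Agr p q θ₁ θ₂ *ᵥ v) j = c (j:ℕ) * v j + y * v j' := by
      rw [Agr, Matrix.add_mulVec, Matrix.add_mulVec, Matrix.smul_mulVec,
        Matrix.smul_mulVec, Matrix.one_mulVec]
      simp only [Pi.add_apply, Pi.smul_apply, smul_eq_mul, hJv, hKv, ← hx, ← hy, hc]
      ring
    rw [hentry]
    by_cases h : (j:ℕ) + 1 < q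
    · -- j + 1 < q
      have hmod : ((j:ℕ) + 1) % q = (j:ℕ) + 1 := Nat.mod_eq_of_lt h
      have hvj' : v j' = (-(1/y))^((j:ℕ)+1) * ∏ k ∈ Finset.range ((j:ℕ)+1), c k := by
        simp only [hv, hj'def]
        rw [hmod]
      rw [hvj', Finset.prod_range_succ, pow_succ, hv]
      simp only [Pi.zero_apply]
      field_simp
      ring
    · -- j + 1 = q
      have h' : (j:ℕ) + 1 = q := by have := j.isLt; omega
      have hmod : ((j:ℕ) + 1) % q = 0 := by rw [h', Nat.mod_self]
      have hvj' : v j' = 1 := by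
        simp only [hv, hj'def]
        rw [hmod]
        simp
      have hjval : (j:ℕ) = q - 1 := by omega
      have hq1 : q - 1 + 1 = q := Nat.succ_pred_eq_of_pos hq
      have hsplit : (∏ k ∈ Finset.range (q-1), c k) * c (q-1) = (-y)^q := by
        rw [← Finset.prod_range_succ, hq1, hkey]
      have hpow : (-(1/y))^(q-1) * (-y)^(q-1) = 1 := by
        rw [← mul_pow]
        field_simp
        simp
      rw [hvj', hv]
      simp only [Pi.zero_apply, hjval]
      have hyq : (-y)^q = (-y)^(q-1) * (-y) := by rw [← pow_succ, hq1]
      rw [mul_one]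
      have : c (q-1) * ((-(1 / y)) ^ (q - 1) * ∏ k ∈ Finset.range (q-1), c k)
          = (-(1/y))^(q-1) * ((∏ k ∈ Finset.range (q-1), c k) * c (q-1)) := by ring
      rw [this, hsplit, hyq, ← mul_assoc, hpow, one_mul]
      ring
  -- conclude
  have hMGw : MG p q θ₁ θ₂ *ᵥ (Sum.elim (0 : Fin q → ℂ) v) = 0 := by
    rw [MG, Matrix.fromBlocks_mulVec]
    simp [hAv]
  have hne : Sum.elim (0 : Fin q → ℂ) v ≠ 0 := by
    intro hcon
    have h0 : v ⟨0, hq⟩ = 1 := by rw [hv]; simp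
    have := congrFun hcon (Sum.inr ⟨0, hq⟩)
    simp [h0] at this
  exact (Matrix.exists_mulVec_eq_zero_iff).mp ⟨Sum.elim (0 : Fin q → ℂ) v, hne, hMGw⟩
end
end

section
/- Let p ∈ ℤ and q ∈ ℕ* be relatively prime, γ = 2πp/q, ω ∈ ℝ, and M_K(θ₁,θ₂,ω) the 3q×3q kagome matrix. Let D_J = diag(J_{p,q}, J_{p,q}, J_{p,q}) and D_K = diag(K_q, K_q, K_q) (3×3 block-diagonal). Then D_J* M_K(θ₁,θ₂,ω) D_J = M_K(θ₁, θ₂ + 2πp/q, ω) and D_K* M_K(θ₁,θ₂,ω) D_K = M_K(θ₁ - 2πp/q, θ₂, ω) for all (θ₁,θ₂) ∈ ℝ². -/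
noncomputable section

open Matrix Complex

/-- Block `A(θ₁,θ₂,ω) = e^{i(ω+γ/8)}(e^{-iθ₁}J* + e^{-iγ/2}e^{-i(θ₁-θ₂)}J*K)`. -/
def AK (p : ℤ) (q : ℕ) (θ₁ θ₂ ω : ℝ) : Matrix (Fin q) (Fin q) ℂ :=
  Complex.exp (Complex.I * ((ω + 2 * Real.pi * (p : ℝ) / (q : ℝ) / 8 : ℝ) : ℂ)) •
    (Complex.exp (-(Complex.I) * (θ₁ : ℂ)) • (Jmat p q)ᴴ
      + (Complex.exp (-(Complex.I) * ((2 * Real.pi * (p : ℝ) / (q : ℝ) / 2 : ℝ) : ℂ)) *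
          Complex.exp (-(Complex.I) * ((θ₁ - θ₂ : ℝ) : ℂ))) • ((Jmat p q)ᴴ * Kmat q))

/-- Block `B(θ₁,θ₂,ω) = e^{-i(ω+γ/8)}(e^{-iθ₁}J* + e^{-iθ₂}K*)`. -/
def BK (p : ℤ) (q : ℕ) (θ₁ θ₂ ω : ℝ) : Matrix (Fin q) (Fin q) ℂ :=
  Complex.exp (-(Complex.I) * ((ω + 2 * Real.pi * (p : ℝ) / (q : ℝ) / 8 : ℝ) : ℂ)) •
    (Complex.exp (-(Complex.I) * (θ₁ : ℂ)) • (Jmat p q)ᴴ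
      + Complex.exp (-(Complex.I) * (θ₂ : ℂ)) • (Kmat q)ᴴ)

/-- Block `C(θ₁,θ₂,ω) = e^{i(ω+γ/8)}(e^{-iγ/2}e^{i(θ₁-θ₂)}JK* + e^{-iθ₂}K*)`. -/
def CK (p : ℤ) (q : ℕ) (θ₁ θ₂ ω : ℝ) : Matrix (Fin q) (Fin q) ℂ :=
  Complex.exp (Complex.I * ((ω + 2 * Real.pi * (p : ℝ) / (q : ℝ) / 8 : ℝ) : ℂ)) •
    ((Complex.exp (-(Complex.I) * ((2 * Real.pi * (p : ℝ) / (q : ℝ) / 2 : ℝ) : ℂ)) *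
        Complex.exp (Complex.I * ((θ₁ - θ₂ : ℝ) : ℂ))) • (Jmat p q * (Kmat q)ᴴ)
      + Complex.exp (-(Complex.I) * (θ₂ : ℂ)) • (Kmat q)ᴴ)

/-- The Hou (kagome) matrix : the `3q × 3q` block matrix `[[0,A,B],[A*,0,C],[B*,C*,0]]`,
indexed by `Fin 3 × Fin q` (first component = block index). -/
def MK (p : ℤ) (q : ℕ) (θ₁ θ₂ ω : ℝ) : Matrix (Fin 3 × Fin q) (Fin 3 × Fin q) ℂ :=
  Matrix.of fun x y =>
    (![![0, AK p q θ₁ θ₂ ω, BK p q θ₁ θ₂ ω],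
       ![(AK p q θ₁ θ₂ ω)ᴴ, 0, CK p q θ₁ θ₂ ω],
       ![(BK p q θ₁ θ₂ ω)ᴴ, (CK p q θ₁ θ₂ ω)ᴴ, 0]] x.1 y.1) x.2 y.2

/-- The characteristic polynomial `P_K(θ₁,θ₂,ω,λ) = det(M_K(θ₁,θ₂,ω) - λ I_{3q})`. -/
def PK (p : ℤ) (q : ℕ) (θ₁ θ₂ ω : ℝ) (l : ℂ) : ℂ :=
  Matrix.det (MK p q θ₁ θ₂ ω - l • (1 : Matrix (Fin 3 × Fin q) (Fin 3 × Fin q) ℂ))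

/-- `3 × 3` block-diagonal matrix `diag(M, M, M)`. -/
def blockDiag3 (q : ℕ) (M : Matrix (Fin q) (Fin q) ℂ) :
    Matrix (Fin 3 × Fin q) (Fin 3 × Fin q) ℂ :=
  Matrix.of fun x y => if x.1 = y.1 then M x.2 y.2 else 0

section lemmas
variable (p : ℤ) (q : ℕ)

lemma modsucc (hq : 0 < q) (j : Fin q) :
    ((j:ℕ)+1) % q = if (j:ℕ)+1 = q then 0 else (j:ℕ)+1 := by
  by_cases h : (j:ℕ)+1 = q
  · simp [h, Nat.mod_self]
  · have := j.isLt
    rw [if_neg h, Nat.mod_eq_of_lt (by omega)]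

lemma Jmat_unitary (hq : 0 < q) : (Jmat p q)ᴴ * Jmat p q = 1 := by
  rw [Jmat, Matrix.diagonal_conjTranspose, Matrix.diagonal_mul_diagonal]
  have h : ∀ j : Fin q, star (Complex.exp (Complex.I * ((j : ℕ) : ℂ) *
      ((2 * Real.pi * (p : ℝ) / (q : ℝ) : ℝ) : ℂ))) * Complex.exp (Complex.I * ((j : ℕ) : ℂ) *
      ((2 * Real.pi * (p : ℝ) / (q : ℝ) : ℝ) : ℂ)) = 1 := by
    intro j
    rw [RCLike.star_def, ← Complex.exp_conj, ← Complex.exp_add, ← Complex.exp_zero]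
    congr 1
    simp only [_root_.map_mul, Complex.conj_I, Complex.conj_ofReal, map_natCast]
    ring
  simp only [Pi.star_apply, h]
  simp [← Matrix.diagonal_one]

lemma KKh (hq : 0 < q) : Kmat q * (Kmat q)ᴴ = 1 := by
  ext j k
  simp only [Matrix.mul_apply, Matrix.conjTranspose_apply, Kmat, Matrix.of_apply]
  rw [Finset.sum_eq_single (⟨((j:ℕ)+1) % q, Nat.mod_lt _ hq⟩ : Fin q)]
  · simp only [Matrix.one_apply]
    by_cases h : j = k
    · subst h; simp
    · have : ¬ (((k:ℕ)+1) % q = ((j:ℕ)+1) % q) := by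
        rw [modsucc q hq j, modsucc q hq k]
        have hj := j.isLt; have hk := k.isLt
        have hne : (j:ℕ) ≠ (k:ℕ) := fun hc => h (Fin.ext hc)
        split <;> split <;> omega
      simp [this, h]
  · intro l _ hl
    have : ¬ (((j:ℕ)+1) % q = (l:ℕ)) := by
      intro hc; exact hl (Fin.ext (by simp [← hc]))
    simp [this]
  · simp

lemma KhK (hq : 0 < q) : (Kmat q)ᴴ * Kmat q = 1 := by
  rw [mul_eq_one_comm]; exact KKh q hq

lemma Jh_J (hq : 0 < q) : Jmat p q * (Jmat p q)ᴴ = 1 := by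
  rw [mul_eq_one_comm]; exact Jmat_unitary p q hq

lemma Kcomm (hq : 0 < q) :
    Kmat q * Jmat p q =
      Complex.exp (Complex.I * ((2 * Real.pi * (p : ℝ) / (q : ℝ) : ℝ) : ℂ)) •
        (Jmat p q * Kmat q) := by
  have hq' : ((q:ℝ):ℂ) ≠ 0 := by
    push_cast
    exact_mod_cast Nat.cast_ne_zero.mpr hq.ne'
  ext j k
  simp only [Jmat, Kmat, Matrix.smul_apply, Matrix.mul_diagonal, Matrix.diagonal_mul,
    Matrix.of_apply, smul_eq_mul]
  by_cases h : ((j:ℕ)+1) % q = (k:ℕ)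
  · simp only [h, if_true, one_mul, mul_one]
    rw [← Complex.exp_add]
    rw [modsucc q hq j] at h
    by_cases h2 : (j:ℕ) + 1 = q
    · rw [if_pos h2] at h
      rw [← h]
      have e0 : Complex.I * ((0:ℕ):ℂ) * ((2 * Real.pi * (p : ℝ) / (q : ℝ) : ℝ) : ℂ) = 0 := by
        simp
      rw [e0, Complex.exp_zero]
      have hj : ((j:ℕ):ℂ) = ((q:ℝ):ℂ) - 1 := by
        have : ((j:ℕ):ℂ) + 1 = ((q:ℕ):ℂ) := by exact_mod_cast h2
        push_cast at this ⊢; linear_combination this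
      have e1 : Complex.I * ((2 * Real.pi * (p : ℝ) / (q : ℝ) : ℝ) : ℂ) +
          Complex.I * ((j:ℕ):ℂ) * ((2 * Real.pi * (p : ℝ) / (q : ℝ) : ℝ) : ℂ)
          = (p:ℂ) * (2 * (Real.pi:ℂ) * Complex.I) := by
        rw [hj]
        push_cast
        push_cast at hq'
        field_simp
        ring
      rw [e1, Complex.exp_int_mul_two_pi_mul_I]
    · rw [if_neg h2] at h
      rw [← h]
      congr 1
      push_cast
      ring
  · simp [h]

end lemmas
section ids
variable (p : ℤ) (q : ℕ)

lemma star_e :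
    star (Complex.exp (Complex.I * ((2 * Real.pi * (p : ℝ) / (q : ℝ) : ℝ) : ℂ))) =
      Complex.exp (-(Complex.I * ((2 * Real.pi * (p : ℝ) / (q : ℝ) : ℝ) : ℂ))) := by
  rw [RCLike.star_def, ← Complex.exp_conj]
  congr 1
  rw [_root_.map_mul, Complex.conj_I, Complex.conj_ofReal]
  ring

lemma e_mul_star :
    Complex.exp (Complex.I * ((2 * Real.pi * (p : ℝ) / (q : ℝ) : ℝ) : ℂ)) *
      Complex.exp (-(Complex.I * ((2 * Real.pi * (p : ℝ) / (q : ℝ) : ℝ) : ℂ))) = 1 := by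
  rw [← Complex.exp_add]; simp

lemma i1 (hq : 0 < q) : (Jmat p q)ᴴ * (Jmat p q)ᴴ * Jmat p q = (Jmat p q)ᴴ := by
  rw [Matrix.mul_assoc, Jmat_unitary p q hq, Matrix.mul_one]

lemma hJKJ (hq : 0 < q) : (Jmat p q)ᴴ * Kmat q * Jmat p q =
    Complex.exp (Complex.I * ((2 * Real.pi * (p : ℝ) / (q : ℝ) : ℝ) : ℂ)) • Kmat q := by
  rw [Matrix.mul_assoc, Kcomm p q hq, Matrix.mul_smul, ← Matrix.mul_assoc,
    Jmat_unitary p q hq, Matrix.one_mul]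

lemma i2 (hq : 0 < q) : (Jmat p q)ᴴ * ((Jmat p q)ᴴ * Kmat q) * Jmat p q =
    Complex.exp (Complex.I * ((2 * Real.pi * (p : ℝ) / (q : ℝ) : ℝ) : ℂ)) •
      ((Jmat p q)ᴴ * Kmat q) := by
  simp only [Matrix.mul_assoc]
  rw [Kcomm p q hq]
  simp only [Matrix.mul_smul]
  rw [← Matrix.mul_assoc (Jmat p q)ᴴ (Jmat p q) (Kmat q), Jmat_unitary p q hq, Matrix.one_mul]

lemma i3 (hq : 0 < q) : (Jmat p q)ᴴ * (Kmat q)ᴴ * Jmat p q =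
    Complex.exp (-(Complex.I * ((2 * Real.pi * (p : ℝ) / (q : ℝ) : ℝ) : ℂ))) • (Kmat q)ᴴ := by
  have h := congrArg Matrix.conjTranspose (hJKJ p q hq)
  simp only [Matrix.conjTranspose_mul, Matrix.conjTranspose_smul,
    Matrix.conjTranspose_conjTranspose, star_e p q, Matrix.mul_assoc] at h
  simp only [Matrix.mul_assoc]
  exact h

lemma hKhJ (hq : 0 < q) : (Kmat q)ᴴ * Jmat p q =
    Complex.exp (-(Complex.I * ((2 * Real.pi * (p : ℝ) / (q : ℝ) : ℝ) : ℂ))) •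
      (Jmat p q * (Kmat q)ᴴ) := by
  have h := congrArg (fun X => Jmat p q * X) (i3 p q hq)
  simp only [Matrix.mul_smul, ← Matrix.mul_assoc, Jh_J p q hq, Matrix.one_mul] at h
  exact h

lemma i4 (hq : 0 < q) : (Jmat p q)ᴴ * (Jmat p q * (Kmat q)ᴴ) * Jmat p q =
    Complex.exp (-(Complex.I * ((2 * Real.pi * (p : ℝ) / (q : ℝ) : ℝ) : ℂ))) •
      (Jmat p q * (Kmat q)ᴴ) := by
  rw [← Matrix.mul_assoc, Jmat_unitary p q hq, Matrix.one_mul]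
  exact hKhJ p q hq

lemma hKhJh (hq : 0 < q) : (Kmat q)ᴴ * (Jmat p q)ᴴ =
    Complex.exp (Complex.I * ((2 * Real.pi * (p : ℝ) / (q : ℝ) : ℝ) : ℂ)) •
      ((Jmat p q)ᴴ * (Kmat q)ᴴ) := by
  have h := congrArg Matrix.conjTranspose (Kcomm p q hq)
  simp only [Matrix.conjTranspose_mul, Matrix.conjTranspose_smul, star_e p q] at h
  rw [h, smul_smul, e_mul_star p q, one_smul]

lemma i5 (hq : 0 < q) : (Kmat q)ᴴ * (Jmat p q)ᴴ * Kmat q =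
    Complex.exp (Complex.I * ((2 * Real.pi * (p : ℝ) / (q : ℝ) : ℝ) : ℂ)) • (Jmat p q)ᴴ := by
  rw [hKhJh p q hq, Matrix.smul_mul, Matrix.mul_assoc, KhK q hq, Matrix.mul_one]

lemma i6 (hq : 0 < q) : (Kmat q)ᴴ * ((Jmat p q)ᴴ * Kmat q) * Kmat q =
    Complex.exp (Complex.I * ((2 * Real.pi * (p : ℝ) / (q : ℝ) : ℝ) : ℂ)) •
      ((Jmat p q)ᴴ * Kmat q) := by
  rw [← Matrix.mul_assoc, i5 p q hq, Matrix.smul_mul]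

lemma i7 (hq : 0 < q) : (Kmat q)ᴴ * (Kmat q)ᴴ * Kmat q = (Kmat q)ᴴ := by
  rw [Matrix.mul_assoc, KhK q hq, Matrix.mul_one]

lemma i8 (hq : 0 < q) : (Kmat q)ᴴ * (Jmat p q * (Kmat q)ᴴ) * Kmat q =
    Complex.exp (-(Complex.I * ((2 * Real.pi * (p : ℝ) / (q : ℝ) : ℝ) : ℂ))) •
      (Jmat p q * (Kmat q)ᴴ) := by
  rw [← Matrix.mul_assoc, Matrix.mul_assoc ((Kmat q)ᴴ * Jmat p q), KhK q hq, Matrix.mul_one]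
  exact hKhJ p q hq

lemma conj2 {n : Type*} [Fintype n] [DecidableEq n] (X Y Z W : Matrix n n ℂ) (c a b : ℂ) :
    X * (c • (a • Y + b • Z)) * W = c • (a • (X * Y * W) + b • (X * Z * W)) := by
  simp only [Matrix.mul_smul, Matrix.smul_mul, Matrix.mul_add, Matrix.add_mul]

lemma conj_conjT {n : Type*} [Fintype n] [DecidableEq n] (M X : Matrix n n ℂ) :
    Mᴴ * Xᴴ * M = (Mᴴ * X * M)ᴴ := by
  simp only [Matrix.conjTranspose_mul, Matrix.conjTranspose_conjTranspose, Matrix.mul_assoc]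

end ids
section blocks
variable (p : ℤ) (q : ℕ) (θ₁ θ₂ ω : ℝ)

lemma JAJ (hq : 0 < q) : (Jmat p q)ᴴ * AK p q θ₁ θ₂ ω * Jmat p q =
    AK p q θ₁ (θ₂ + 2 * Real.pi * (p : ℝ) / (q : ℝ)) ω := by
  rw [AK, AK, conj2, i1 p q hq, i2 p q hq, smul_smul]
  have hb : Complex.exp (-(Complex.I) * ((2 * Real.pi * (p : ℝ) / (q : ℝ) / 2 : ℝ) : ℂ)) *
      Complex.exp (-(Complex.I) * ((θ₁ - θ₂ : ℝ) : ℂ)) *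
      Complex.exp (Complex.I * ((2 * Real.pi * (p : ℝ) / (q : ℝ) : ℝ) : ℂ)) =
      Complex.exp (-(Complex.I) * ((2 * Real.pi * (p : ℝ) / (q : ℝ) / 2 : ℝ) : ℂ)) *
      Complex.exp (-(Complex.I) * ((θ₁ - (θ₂ + 2 * Real.pi * (p : ℝ) / (q : ℝ)) : ℝ) : ℂ)) := by
    rw [mul_assoc, ← Complex.exp_add]
    congr 2
    push_cast
    ring
  rw [hb]

lemma JBJ (hq : 0 < q) : (Jmat p q)ᴴ * BK p q θ₁ θ₂ ω * Jmat p q =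
    BK p q θ₁ (θ₂ + 2 * Real.pi * (p : ℝ) / (q : ℝ)) ω := by
  rw [BK, BK, conj2, i1 p q hq, i3 p q hq, smul_smul]
  have hb : Complex.exp (-(Complex.I) * (θ₂ : ℂ)) *
      Complex.exp (-(Complex.I * ((2 * Real.pi * (p : ℝ) / (q : ℝ) : ℝ) : ℂ))) =
      Complex.exp (-(Complex.I) * ((θ₂ + 2 * Real.pi * (p : ℝ) / (q : ℝ) : ℝ) : ℂ)) := by
    rw [← Complex.exp_add]
    congr 1
    push_cast
    ring
  rw [hb]

lemma JCJ (hq : 0 < q) : (Jmat p q)ᴴ * CK p q θ₁ θ₂ ω * Jmat p q =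
    CK p q θ₁ (θ₂ + 2 * Real.pi * (p : ℝ) / (q : ℝ)) ω := by
  rw [CK, CK, conj2, i4 p q hq, i3 p q hq, smul_smul, smul_smul]
  have hb : Complex.exp (-(Complex.I) * ((2 * Real.pi * (p : ℝ) / (q : ℝ) / 2 : ℝ) : ℂ)) *
      Complex.exp (Complex.I * ((θ₁ - θ₂ : ℝ) : ℂ)) *
      Complex.exp (-(Complex.I * ((2 * Real.pi * (p : ℝ) / (q : ℝ) : ℝ) : ℂ))) =
      Complex.exp (-(Complex.I) * ((2 * Real.pi * (p : ℝ) / (q : ℝ) / 2 : ℝ) : ℂ)) *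
      Complex.exp (Complex.I * ((θ₁ - (θ₂ + 2 * Real.pi * (p : ℝ) / (q : ℝ)) : ℝ) : ℂ)) := by
    rw [mul_assoc, ← Complex.exp_add]
    congr 2
    push_cast
    ring
  have hd : Complex.exp (-(Complex.I) * (θ₂ : ℂ)) *
      Complex.exp (-(Complex.I * ((2 * Real.pi * (p : ℝ) / (q : ℝ) : ℝ) : ℂ))) =
      Complex.exp (-(Complex.I) * ((θ₂ + 2 * Real.pi * (p : ℝ) / (q : ℝ) : ℝ) : ℂ)) := by
    rw [← Complex.exp_add]
    congr 1
    push_cast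
    ring
  rw [hb, hd]

lemma KAK (hq : 0 < q) : (Kmat q)ᴴ * AK p q θ₁ θ₂ ω * Kmat q =
    AK p q (θ₁ - 2 * Real.pi * (p : ℝ) / (q : ℝ)) θ₂ ω := by
  rw [AK, AK, conj2, i5 p q hq, i6 p q hq, smul_smul, smul_smul]
  have ha : Complex.exp (-(Complex.I) * (θ₁ : ℂ)) *
      Complex.exp (Complex.I * ((2 * Real.pi * (p : ℝ) / (q : ℝ) : ℝ) : ℂ)) =
      Complex.exp (-(Complex.I) * ((θ₁ - 2 * Real.pi * (p : ℝ) / (q : ℝ) : ℝ) : ℂ)) := by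
    rw [← Complex.exp_add]
    congr 1
    push_cast
    ring
  have hb : Complex.exp (-(Complex.I) * ((2 * Real.pi * (p : ℝ) / (q : ℝ) / 2 : ℝ) : ℂ)) *
      Complex.exp (-(Complex.I) * ((θ₁ - θ₂ : ℝ) : ℂ)) *
      Complex.exp (Complex.I * ((2 * Real.pi * (p : ℝ) / (q : ℝ) : ℝ) : ℂ)) =
      Complex.exp (-(Complex.I) * ((2 * Real.pi * (p : ℝ) / (q : ℝ) / 2 : ℝ) : ℂ)) *
      Complex.exp (-(Complex.I) * ((θ₁ - 2 * Real.pi * (p : ℝ) / (q : ℝ) - θ₂ : ℝ) : ℂ)) := by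
    rw [mul_assoc, ← Complex.exp_add]
    congr 2
    push_cast
    ring
  rw [ha, hb]

lemma KBK (hq : 0 < q) : (Kmat q)ᴴ * BK p q θ₁ θ₂ ω * Kmat q =
    BK p q (θ₁ - 2 * Real.pi * (p : ℝ) / (q : ℝ)) θ₂ ω := by
  rw [BK, BK, conj2, i5 p q hq, i7 q hq, smul_smul]
  have ha : Complex.exp (-(Complex.I) * (θ₁ : ℂ)) *
      Complex.exp (Complex.I * ((2 * Real.pi * (p : ℝ) / (q : ℝ) : ℝ) : ℂ)) =
      Complex.exp (-(Complex.I) * ((θ₁ - 2 * Real.pi * (p : ℝ) / (q : ℝ) : ℝ) : ℂ)) := by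
    rw [← Complex.exp_add]
    congr 1
    push_cast
    ring
  rw [ha]

lemma KCK (hq : 0 < q) : (Kmat q)ᴴ * CK p q θ₁ θ₂ ω * Kmat q =
    CK p q (θ₁ - 2 * Real.pi * (p : ℝ) / (q : ℝ)) θ₂ ω := by
  rw [CK, CK, conj2, i8 p q hq, i7 q hq, smul_smul]
  have hb : Complex.exp (-(Complex.I) * ((2 * Real.pi * (p : ℝ) / (q : ℝ) / 2 : ℝ) : ℂ)) *
      Complex.exp (Complex.I * ((θ₁ - θ₂ : ℝ) : ℂ)) *
      Complex.exp (-(Complex.I * ((2 * Real.pi * (p : ℝ) / (q : ℝ) : ℝ) : ℂ))) =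
      Complex.exp (-(Complex.I) * ((2 * Real.pi * (p : ℝ) / (q : ℝ) / 2 : ℝ) : ℂ)) *
      Complex.exp (Complex.I * ((θ₁ - 2 * Real.pi * (p : ℝ) / (q : ℝ) - θ₂ : ℝ) : ℂ)) := by
    rw [mul_assoc, ← Complex.exp_add]
    congr 2
    push_cast
    ring
  rw [hb]

end blocks
lemma sum_ite_const {α : Type*} [Fintype α] (c : Prop) [Decidable c] (f : α → ℂ) :
    (∑ x : α, if c then f x else 0) = if c then ∑ x, f x else 0 := by
  split <;> simp

lemma conj_block {q : ℕ} (T T' : Fin 3 → Fin 3 → Matrix (Fin q) (Fin q) ℂ)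
    (M : Matrix (Fin q) (Fin q) ℂ)
    (h : ∀ i j, Mᴴ * T i j * M = T' i j) :
    (blockDiag3 q M)ᴴ * (Matrix.of fun x y => T x.1 y.1 x.2 y.2) * blockDiag3 q M =
      Matrix.of fun x y => T' x.1 y.1 x.2 y.2 := by
  ext ⟨i, a⟩ ⟨j, b⟩
  rw [Matrix.of_apply, ← h i j]
  simp only [Matrix.mul_apply, Matrix.conjTranspose_apply, blockDiag3, Matrix.of_apply,
    Fintype.sum_prod_type, apply_ite (star : ℂ → ℂ), star_zero, ite_mul, zero_mul,
    mul_ite, mul_zero, sum_ite_const, Finset.sum_ite_eq, Finset.sum_ite_eq',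
    Finset.mem_univ, if_true]

theorem stmt_10 (p : ℤ) (q : ℕ) (hq : 0 < q) (hpq : Int.gcd p (q : ℤ) = 1)
    (ω θ₁ θ₂ : ℝ) :
    (blockDiag3 q (Jmat p q))ᴴ * MK p q θ₁ θ₂ ω * blockDiag3 q (Jmat p q) =
        MK p q θ₁ (θ₂ + 2 * Real.pi * (p : ℝ) / (q : ℝ)) ω ∧
    (blockDiag3 q (Kmat q))ᴴ * MK p q θ₁ θ₂ ω * blockDiag3 q (Kmat q) =
        MK p q (θ₁ - 2 * Real.pi * (p : ℝ) / (q : ℝ)) θ₂ ω := by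
  constructor
  · unfold MK
    refine conj_block
      (fun i j => ![![0, AK p q θ₁ θ₂ ω, BK p q θ₁ θ₂ ω],
       ![(AK p q θ₁ θ₂ ω)ᴴ, 0, CK p q θ₁ θ₂ ω],
       ![(BK p q θ₁ θ₂ ω)ᴴ, (CK p q θ₁ θ₂ ω)ᴴ, 0]] i j)
      (fun i j =>
        ![![0, AK p q θ₁ (θ₂ + 2 * Real.pi * (p : ℝ) / (q : ℝ)) ω,
            BK p q θ₁ (θ₂ + 2 * Real.pi * (p : ℝ) / (q : ℝ)) ω],
          ![(AK p q θ₁ (θ₂ + 2 * Real.pi * (p : ℝ) / (q : ℝ)) ω)ᴴ, 0,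
            CK p q θ₁ (θ₂ + 2 * Real.pi * (p : ℝ) / (q : ℝ)) ω],
          ![(BK p q θ₁ (θ₂ + 2 * Real.pi * (p : ℝ) / (q : ℝ)) ω)ᴴ,
            (CK p q θ₁ (θ₂ + 2 * Real.pi * (p : ℝ) / (q : ℝ)) ω)ᴴ, 0]] i j)
      (Jmat p q) ?_
    intro i j
    fin_cases i <;> fin_cases j <;>
      simp only [Fin.reduceFinMk, Fin.isValue, Matrix.cons_val_zero, Matrix.cons_val_one,
        Matrix.head_cons, Matrix.cons_val_two, Matrix.tail_cons, Matrix.mul_zero,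
        Matrix.zero_mul, Fin.mk_zero, Fin.mk_one]
    · exact JAJ p q θ₁ θ₂ ω hq
    · exact JBJ p q θ₁ θ₂ ω hq
    · rw [conj_conjT, JAJ p q θ₁ θ₂ ω hq]
    · exact JCJ p q θ₁ θ₂ ω hq
    · rw [conj_conjT, JBJ p q θ₁ θ₂ ω hq]
    · rw [conj_conjT, JCJ p q θ₁ θ₂ ω hq]
  · unfold MK
    refine conj_block
      (fun i j => ![![0, AK p q θ₁ θ₂ ω, BK p q θ₁ θ₂ ω],
       ![(AK p q θ₁ θ₂ ω)ᴴ, 0, CK p q θ₁ θ₂ ω],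
       ![(BK p q θ₁ θ₂ ω)ᴴ, (CK p q θ₁ θ₂ ω)ᴴ, 0]] i j)
      (fun i j =>
        ![![0, AK p q (θ₁ - 2 * Real.pi * (p : ℝ) / (q : ℝ)) θ₂ ω,
            BK p q (θ₁ - 2 * Real.pi * (p : ℝ) / (q : ℝ)) θ₂ ω],
          ![(AK p q (θ₁ - 2 * Real.pi * (p : ℝ) / (q : ℝ)) θ₂ ω)ᴴ, 0,
            CK p q (θ₁ - 2 * Real.pi * (p : ℝ) / (q : ℝ)) θ₂ ω],
          ![(BK p q (θ₁ - 2 * Real.pi * (p : ℝ) / (q : ℝ)) θ₂ ω)ᴴ,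
            (CK p q (θ₁ - 2 * Real.pi * (p : ℝ) / (q : ℝ)) θ₂ ω)ᴴ, 0]] i j)
      (Kmat q) ?_
    intro i j
    fin_cases i <;> fin_cases j <;>
      simp only [Fin.reduceFinMk, Fin.isValue, Matrix.cons_val_zero, Matrix.cons_val_one,
        Matrix.head_cons, Matrix.cons_val_two, Matrix.tail_cons, Matrix.mul_zero,
        Matrix.zero_mul, Fin.mk_zero, Fin.mk_one]
    · exact KAK p q θ₁ θ₂ ω hq
    · exact KBK p q θ₁ θ₂ ω hq
    · rw [conj_conjT, KAK p q θ₁ θ₂ ω hq]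
    · exact KCK p q θ₁ θ₂ ω hq
    · rw [conj_conjT, KBK p q θ₁ θ₂ ω hq]
    · rw [conj_conjT, KCK p q θ₁ θ₂ ω hq]
end
end
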